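/- arXiv:1903.11595 — 6 statements merged into one kernel-verified Lean document; each statement's English description precedes it below -/
import Mathlib

section
/- Let f : S¹ → S¹ be a C² expanding map of degree d ≥ 2, and suppose there is λ > 1 such that every periodic point p of f with fⁿ(p) = p satisfies |Dfⁿ(p)| = λⁿ. If for each n the circle decomposes into dⁿ maximal intervals of injectivity I_{n,1},…,I_{n,dⁿ} of fⁿ, each containing a fixed point of fⁿ, and the bounded distortion estimate (1/C)|Dfⁿ(p_{n,j})|·|I_{n,j}| ≤ 1 ≤ C|Dfⁿ(p_{n,j})|·|I_{n,j}| holds with a constant C independent of n and j, then 1/C ≤ dⁿ/λⁿ ≤ C for all n ≥ 1, and consequently λ = d. -/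
lemma aux_eq_one (x C : ℝ) (hx : 0 < x) (hC : 1 ≤ C)
    (h1 : ∀ n : ℕ, 1 ≤ n → x ^ n ≤ C) (h2 : ∀ n : ℕ, 1 ≤ n → x⁻¹ ^ n ≤ C) :
    x = 1 := by
  by_contra hne
  rcases lt_or_gt_of_ne hne with h | h
  · have hx1 : 1 < x⁻¹ := (one_lt_inv₀ hx).mpr h
    obtain ⟨n, hn⟩ := pow_unbounded_of_one_lt C hx1
    have := h2 (n + 1) (Nat.le_add_left 1 n)
    have hle : x⁻¹ ^ n ≤ x⁻¹ ^ (n + 1) :=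
      pow_le_pow_right₀ hx1.le (Nat.le_succ n)
    linarith
  · obtain ⟨n, hn⟩ := pow_unbounded_of_one_lt C h
    have := h1 (n + 1) (Nat.le_add_left 1 n)
    have hle : x ^ n ≤ x ^ (n + 1) := pow_le_pow_right₀ h.le (Nat.le_succ n)
    linarith

/-- Rigidity of the exponent for an expanding circle map of degree `d` with
constant periodic data `|Dfⁿ(p)| = λⁿ`.  The circle is partitioned (for each
`n ≥ 1`) into `dⁿ` maximal intervals of injectivity `I_{n,j}` (of lengths
`len n j` summing to `1`), each containing a fixed point `p_{n,j}` of `fⁿ`,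
and bounded distortion gives `(1/C)·λⁿ·|I_{n,j}| ≤ 1 ≤ C·λⁿ·|I_{n,j}|`.
Then `1/C ≤ dⁿ/λⁿ ≤ C` for all `n ≥ 1`, and consequently `λ = d`. -/
theorem stmt2 (d : ℕ) (hd : 2 ≤ d) (lam C : ℝ) (hlam : 1 < lam) (hC : 1 ≤ C)
    (len : ℕ → ℕ → ℝ)
    (hpos : ∀ n j, 1 ≤ n → j < d ^ n → 0 < len n j)
    (hcover : ∀ n, 1 ≤ n → (∑ j ∈ Finset.range (d ^ n), len n j) = 1)
    (hdist : ∀ n j, 1 ≤ n → j < d ^ n →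
      (1 / C) * lam ^ n * len n j ≤ 1 ∧ 1 ≤ C * lam ^ n * len n j) :
    (∀ n, 1 ≤ n → 1 / C ≤ (d : ℝ) ^ n / lam ^ n ∧ (d : ℝ) ^ n / lam ^ n ≤ C) ∧
    lam = (d : ℝ) := by
  have hC0 : (0 : ℝ) < C := lt_of_lt_of_le one_pos hC
  have hlam0 : (0 : ℝ) < lam := lt_trans one_pos hlam
  have hd0 : (0 : ℝ) < (d : ℝ) := by positivity
  have key : ∀ n, 1 ≤ n → 1 / C ≤ (d : ℝ) ^ n / lam ^ n ∧ (d : ℝ) ^ n / lam ^ n ≤ C := by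
    intro n hn
    have hl : (0 : ℝ) < lam ^ n := pow_pos hlam0 n
    have hupper : ∀ j ∈ Finset.range (d ^ n), len n j ≤ C / lam ^ n := by
      intro j hj
      have h := (hdist n j hn (Finset.mem_range.mp hj)).1
      have hCC : C * (1 / C * lam ^ n * len n j) = lam ^ n * len n j := by
        field_simp
      rw [le_div_iff₀ hl]
      nlinarith [mul_le_mul_of_nonneg_left h hC0.le]
    have hlower : ∀ j ∈ Finset.range (d ^ n), 1 / (C * lam ^ n) ≤ len n j := by
      intro j hj
      have h := (hdist n j hn (Finset.mem_range.mp hj)).2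
      rw [div_le_iff₀ (by positivity)]
      nlinarith
    have hsum1 : (1 : ℝ) ≤ (d ^ n : ℕ) * (C / lam ^ n) := by
      calc (1 : ℝ) = ∑ j ∈ Finset.range (d ^ n), len n j := (hcover n hn).symm
        _ ≤ ∑ j ∈ Finset.range (d ^ n), (C / lam ^ n) := Finset.sum_le_sum hupper
        _ = (d ^ n : ℕ) * (C / lam ^ n) := by
            rw [Finset.sum_const, Finset.card_range, nsmul_eq_mul]
    have hsum2 : ((d ^ n : ℕ) : ℝ) * (1 / (C * lam ^ n)) ≤ 1 := by
      calc ((d ^ n : ℕ) : ℝ) * (1 / (C * lam ^ n))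
          = ∑ j ∈ Finset.range (d ^ n), (1 / (C * lam ^ n)) := by
            rw [Finset.sum_const, Finset.card_range, nsmul_eq_mul]
        _ ≤ ∑ j ∈ Finset.range (d ^ n), len n j := Finset.sum_le_sum hlower
        _ = 1 := hcover n hn
    push_cast at hsum1 hsum2
    have hdp : (0:ℝ) < (d:ℝ)^n := by positivity
    constructor
    · rw [div_le_div_iff₀ hC0 hl]
      have h1 : lam ^ n ≤ (d:ℝ)^n * C := by
        have := mul_le_mul_of_nonneg_left hsum1 hl.le
        rw [mul_one, mul_div_assoc'] at this
        calc lam ^ n ≤ lam ^ n * ((d:ℝ)^n * C) / lam ^ n := by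
              rw [mul_div_assoc]; exact this
          _ = (d:ℝ)^n * C := by field_simp
      linarith
    · rw [div_le_iff₀ hl]
      have h2 : (d:ℝ)^n ≤ C * lam ^ n := by
        have := mul_le_mul_of_nonneg_left hsum2 (mul_pos hC0 hl).le
        rw [mul_one] at this
        calc (d:ℝ)^n = C * lam ^ n * ((d:ℝ)^n * (1/(C*lam^n))) := by field_simp
          _ ≤ C * lam ^ n * 1 := by
              exact mul_le_mul_of_nonneg_left hsum2 (mul_pos hC0 hl).le
          _ = C * lam ^ n := mul_one _
      linarith
  refine ⟨key, ?_⟩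
  have hx : lam / d = 1 := by
    apply aux_eq_one (lam / d) C (by positivity) hC
    · intro n hn
      have h := (key n hn).1
      rw [div_le_div_iff₀ hC0 (pow_pos hlam0 n)] at h
      rw [div_pow, div_le_iff₀ (by positivity : (0:ℝ) < (d:ℝ)^n)]
      linarith
    · intro n hn
      have h := (key n hn).2
      rw [div_le_iff₀ (pow_pos hlam0 n)] at h
      rw [inv_div, div_pow, div_le_iff₀ (pow_pos hlam0 n)]
      linarith
  have hd0' : (d:ℝ) ≠ 0 := ne_of_gt hd0
  field_simp at hx
  linarith [hx]
end

section
/- Let h : S¹ → S¹ be a homeomorphism conjugating two maps, and suppose there is a constant C ≥ 1 and, for each n, a finite cover of S¹ by intervals {I_{n,j}} with max_j |I_{n,j}| → 0 as n → ∞, such that (1/C) ≤ |h(I_{n,j})|/|I_{n,j}| ≤ C for all n, j. Then h is bi-Lipschitz with Lipschitz constants C (for h) and C (for h⁻¹). -/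
open Classical

/-- If a circle homeomorphism `h` (modelled by its increasing lift with
`h (x+1) = h x + 1`) distorts the lengths of the intervals of finer and finer
partitions `0 = t n 0 < t n 1 < ⋯ < t n (N n) = 1` (with mesh tending to `0`)
by a factor at most `C`, then `h` is bi-Lipschitz with constant `C`. -/
theorem stmt3 (h : ℝ → ℝ) (hmono : StrictMono h) (hcont : Continuous h)
    (hper : ∀ x : ℝ, h (x + 1) = h x + 1)
    (C : ℝ) (hC : 1 ≤ C) (N : ℕ → ℕ) (hN : ∀ n, 1 ≤ N n)
    (t : ℕ → ℕ → ℝ)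
    (ht0 : ∀ n, t n 0 = 0) (ht1 : ∀ n, t n (N n) = 1)
    (htmono : ∀ n, ∀ j < N n, t n j < t n (j + 1))
    (hratio : ∀ n, ∀ j < N n,
      1 / C ≤ (h (t n (j + 1)) - h (t n j)) / (t n (j + 1) - t n j) ∧
      (h (t n (j + 1)) - h (t n j)) / (t n (j + 1) - t n j) ≤ C)
    (hmesh : ∀ ε : ℝ, 0 < ε → ∃ M : ℕ, ∀ n ≥ M, ∀ j < N n,
      t n (j + 1) - t n j < ε) :
    ∀ x y : ℝ, (1 / C) * |x - y| ≤ |h x - h y| ∧ |h x - h y| ≤ C * |x - y| := by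
  have hCpos : (0:ℝ) < C := lt_of_lt_of_le one_pos hC
  have hinvle : 1 / C ≤ 1 := by rw [div_le_one hCpos]; exact hC
  have hinvpos : (0:ℝ) < 1 / C := by positivity
  -- single-step distortion bounds
  have step : ∀ n, ∀ j < N n,
      (1/C) * (t n (j+1) - t n j) ≤ h (t n (j+1)) - h (t n j) ∧
      h (t n (j+1)) - h (t n j) ≤ C * (t n (j+1) - t n j) := by
    intro n j hj
    have hd : 0 < t n (j+1) - t n j := sub_pos.2 (htmono n j hj)
    obtain ⟨h1, h2⟩ := hratio n j hj
    exact ⟨(le_div_iff₀ hd).1 h1, (div_le_iff₀ hd).1 h2⟩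
  -- monotonicity of partition points
  have tmono : ∀ n j k, j ≤ k → k ≤ N n → t n j ≤ t n k := by
    intro n j k hjk
    induction k, hjk using Nat.le_induction with
    | base => intro _; exact le_rfl
    | succ k hk ih =>
      intro hk1
      have h1 : k < N n := Nat.lt_of_succ_le hk1
      exact le_trans (ih (le_of_lt h1)) (le_of_lt (htmono n k h1))
  have tsmono : ∀ n j k, j < k → k ≤ N n → t n j < t n k := by
    intro n j k hjk hk
    exact lt_of_lt_of_le (htmono n j (lt_of_lt_of_le hjk hk))
      (tmono n (j+1) k hjk hk)
  -- telescoping distortion bounds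
  have tele : ∀ n j k, j ≤ k → k ≤ N n →
      (1/C) * (t n k - t n j) ≤ h (t n k) - h (t n j) ∧
      h (t n k) - h (t n j) ≤ C * (t n k - t n j) := by
    intro n j k hjk
    induction k, hjk using Nat.le_induction with
    | base => intro _; constructor <;> simp
    | succ k hk ih =>
      intro hk1
      have h1 : k < N n := Nat.lt_of_succ_le hk1
      obtain ⟨i1, i2⟩ := ih (le_of_lt h1)
      obtain ⟨s1, s2⟩ := step n k h1
      constructor <;> nlinarith
  -- core lemma on [0, 1]
  have core : ∀ x y : ℝ, 0 ≤ x → x ≤ y → y ≤ 1 →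
      (1/C) * (y - x) ≤ h y - h x ∧ h y - h x ≤ C * (y - x) := by
    intro x y hx hxy hy1
    have hy0 : (0:ℝ) ≤ y := le_trans hx hxy
    have hx1 : x ≤ 1 := le_trans hxy hy1
    have hhxy : h x ≤ h y := hmono.monotone hxy
    constructor
    · -- lower bound, with epsilon
      refine le_of_forall_pos_le_add ?_
      intro ε hε
      have hε2 : 0 < ε / 2 := by positivity
      obtain ⟨M, hM⟩ := hmesh (ε/2) hε2
      have hm : ∀ j < N M, t M (j+1) - t M j < ε/2 := hM M le_rfl
      -- least j with x ≤ t M j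
      have hexj : ∃ j, x ≤ t M j := ⟨N M, by rw [ht1]; exact hx1⟩
      set j1 := Nat.find hexj with hj1def
      have hj1x : x ≤ t M j1 := Nat.find_spec hexj
      have hj1le : j1 ≤ N M := Nat.find_min' hexj (by rw [ht1]; exact hx1)
      -- greatest k with t M k ≤ y
      set k1 := Nat.findGreatest (fun k => t M k ≤ y) (N M) with hk1def
      have hk1le : k1 ≤ N M := Nat.findGreatest_le _
      have hk1y : t M k1 ≤ y :=
        Nat.findGreatest_spec (P := fun k => t M k ≤ y) (Nat.zero_le _) (show t M 0 ≤ y by rw [ht0]; exact hy0)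
      by_cases hcase : j1 ≤ k1
      · -- t M j1 ≤ x + ε/2
        have hj1up : t M j1 ≤ x + ε/2 := by
          rcases Nat.eq_zero_or_pos j1 with h0 | hpos
          · rw [h0, ht0]; linarith
          · have hlt : j1 - 1 < j1 := Nat.sub_lt hpos one_pos
            have hnotle : ¬ x ≤ t M (j1 - 1) := Nat.find_min hexj hlt
            have hsub : j1 - 1 < N M := lt_of_lt_of_le hlt hj1le
            have := hm (j1 - 1) hsub
            rw [Nat.sub_add_cancel hpos] at this
            push_neg at hnotle
            linarith
        -- y - ε/2 ≤ t M k1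
        have hk1lo : y - ε/2 ≤ t M k1 := by
          rcases eq_or_lt_of_le hk1le with h0 | hlt
          · rw [h0, ht1]; linarith
          · have hng : ¬ t M (k1 + 1) ≤ y :=
              Nat.findGreatest_is_greatest (Nat.lt_succ_self k1) hlt
            push_neg at hng
            have := hm k1 hlt
            linarith
        obtain ⟨l1, _⟩ := tele M j1 k1 hcase hk1le
        have e1 : h (t M k1) ≤ h y := hmono.monotone hk1y
        have e2 : h x ≤ h (t M j1) := hmono.monotone hj1x
        nlinarith
      · -- the two points are within one mesh interval
        push_neg at hcase
        have hpos : 0 < j1 := lt_of_le_of_lt (Nat.zero_le _) hcase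
        have hlt : j1 - 1 < j1 := Nat.sub_lt hpos one_pos
        have hnotle : ¬ x ≤ t M (j1 - 1) := Nat.find_min hexj hlt
        push_neg at hnotle
        have hk1j : k1 ≤ j1 - 1 := Nat.le_sub_one_of_lt hcase
        have hj1suble : j1 - 1 ≤ N M := le_trans (le_of_lt hlt) hj1le
        have htk1x : t M k1 < x := lt_of_le_of_lt (tmono M k1 (j1-1) hk1j hj1suble) hnotle
        have hk1N : k1 < N M := lt_of_lt_of_le hcase hj1le
        have hng : ¬ t M (k1 + 1) ≤ y :=
          Nat.findGreatest_is_greatest (Nat.lt_succ_self k1) hk1N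
        push_neg at hng
        have hmesh1 := hm k1 hk1N
        have hyx : y - x < ε/2 := by linarith
        nlinarith
    · -- upper bound, with epsilon
      refine le_of_forall_pos_le_add ?_
      intro ε hε
      have hε2 : 0 < ε / (2*C) := by positivity
      obtain ⟨M, hM⟩ := hmesh (ε/(2*C)) hε2
      have hm : ∀ j < N M, t M (j+1) - t M j < ε/(2*C) := hM M le_rfl
      -- greatest j with t M j ≤ x
      set j0 := Nat.findGreatest (fun j => t M j ≤ x) (N M) with hj0def
      have hj0le : j0 ≤ N M := Nat.findGreatest_le _
      have hj0x : t M j0 ≤ x :=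
        Nat.findGreatest_spec (P := fun j => t M j ≤ x) (Nat.zero_le _) (show t M 0 ≤ x by rw [ht0]; exact hx)
      -- least k with y ≤ t M k
      have hexk : ∃ k, y ≤ t M k := ⟨N M, by rw [ht1]; exact hy1⟩
      set k0 := Nat.find hexk with hk0def
      have hk0y : y ≤ t M k0 := Nat.find_spec hexk
      have hk0le : k0 ≤ N M := Nat.find_min' hexk (by rw [ht1]; exact hy1)
      have hjk : j0 ≤ k0 := by
        by_contra hcon
        push_neg at hcon
        have := tsmono M k0 j0 hcon hj0le
        linarith
      -- x - ε' ≤ t M j0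
      have hj0lo : x - ε/(2*C) ≤ t M j0 := by
        rcases eq_or_lt_of_le hj0le with h0 | hlt
        · rw [h0, ht1]; linarith
        · have hng : ¬ t M (j0 + 1) ≤ x :=
            Nat.findGreatest_is_greatest (Nat.lt_succ_self j0) hlt
          push_neg at hng
          have := hm j0 hlt
          linarith
      -- t M k0 ≤ y + ε'
      have hk0up : t M k0 ≤ y + ε/(2*C) := by
        rcases Nat.eq_zero_or_pos k0 with h0 | hpos
        · rw [h0, ht0]; linarith
        · have hlt : k0 - 1 < k0 := Nat.sub_lt hpos one_pos
          have hnotle : ¬ y ≤ t M (k0 - 1) := Nat.find_min hexk hlt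
          push_neg at hnotle
          have hsub : k0 - 1 < N M := lt_of_lt_of_le hlt hk0le
          have := hm (k0 - 1) hsub
          rw [Nat.sub_add_cancel hpos] at this
          linarith
      obtain ⟨_, u2⟩ := tele M j0 k0 hjk hk0le
      have e1 : h y ≤ h (t M k0) := hmono.monotone hk0y
      have e2 : h (t M j0) ≤ h x := hmono.monotone hj0x
      have hCne : C ≠ 0 := ne_of_gt hCpos
      have key : C * (t M k0 - t M j0) ≤ C * (y - x) + ε := by
        have hb : t M k0 - t M j0 ≤ (y - x) + 2 * (ε/(2*C)) := by linarith
        calc C * (t M k0 - t M j0) ≤ C * ((y - x) + 2 * (ε/(2*C))) := by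
              exact mul_le_mul_of_nonneg_left hb (le_of_lt hCpos)
          _ = C * (y - x) + ε := by field_simp
      linarith
  -- translation by integers
  have hZ : ∀ (k : ℤ) (x : ℝ), h (x + k) = h x + k := by
    intro k
    induction k using Int.induction_on with
    | zero => intro x; simp
    | succ k ih =>
      intro x
      have ihx := ih x
      have e := hper (x + (k:ℝ))
      push_cast at ihx ⊢
      rw [show x + ((k:ℝ) + 1) = (x + (k:ℝ)) + 1 by ring, e, ihx]
      ring
    | pred k ih =>
      intro x
      have ihx := ih x
      have e := hper (x + (-(k:ℝ) - 1))
      push_cast at ihx ⊢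
      rw [show x + -(k:ℝ) = (x + (-(k:ℝ) - 1)) + 1 by ring, e] at ihx
      rw [show x + (-(k:ℝ) - 1) = x + (-(k:ℝ) - 1) by ring]
      linarith
  -- bi-Lipschitz on intervals of length ≤ 1
  have unit : ∀ x y : ℝ, x ≤ y → y ≤ x + 1 →
      (1/C) * (y - x) ≤ h y - h x ∧ h y - h x ≤ C * (y - x) := by
    intro x y hxy hy1
    set k : ℤ := ⌊x⌋ with hkdef
    have hx0 : 0 ≤ x - k := sub_nonneg.2 (Int.floor_le x)
    have hx1 : x - k < 1 := by
      have := Int.lt_floor_add_one x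
      linarith
    have hhx : h x = h (x - k) + k := by
      have := hZ k (x - k); rw [sub_add_cancel] at this; rw [this]
    have hhy : h y = h (y - k) + k := by
      have := hZ k (y - k); rw [sub_add_cancel] at this; rw [this]
    have hxy' : x - k ≤ y - k := by linarith
    have ed : h y - h x = h (y - k) - h (x - k) := by rw [hhx, hhy]; ring
    by_cases hc : y - k ≤ 1
    · obtain ⟨l, u⟩ := core (x - k) (y - k) hx0 hxy' hc
      have er : (1/C) * (y - x) = (1/C) * (y - k - (x - k)) := by ring
      have er2 : C * (y - x) = C * (y - k - (x - k)) := by ring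
      exact ⟨by linarith, by linarith⟩
    · push_neg at hc
      have hy2 : y - k ≤ 2 := by linarith
      obtain ⟨l1, u1⟩ := core (x - k) 1 hx0 (le_of_lt hx1) le_rfl
      obtain ⟨l2, u2⟩ := core 0 (y - k - 1) (by linarith) (by linarith) (by linarith)
      have e1 : h (y - k) = h (y - k - 1) + 1 := by
        have := hper (y - k - 1); rw [sub_add_cancel] at this; rw [this]
      have e2 : h 1 = h 0 + 1 := by
        have := hper 0; rw [zero_add] at this; rw [this]
      have hsplit : h (y - k) - h (x - k) =
          (h (y - k - 1) - h 0) + (h 1 - h (x - k)) := by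
        rw [e1, e2]; ring
      have er : (1/C) * (y - x) = (1/C) * (1 - (x - k)) + (1/C) * (y - k - 1 - 0) := by ring
      have er2 : C * (y - x) = C * (1 - (x - k)) + C * (y - k - 1 - 0) := by ring
      exact ⟨by linarith, by linarith⟩
  -- extend to arbitrary gaps
  have all : ∀ m : ℕ, ∀ x y : ℝ, x ≤ y → y ≤ x + m →
      (1/C) * (y - x) ≤ h y - h x ∧ h y - h x ≤ C * (y - x) := by
    intro m
    induction m with
    | zero =>
      intro x y hxy hym
      have : x = y := le_antisymm hxy (by simpa using hym)
      subst this; simp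
    | succ m ih =>
      intro x y hxy hym
      by_cases hc : y ≤ x + m
      · exact ih x y hxy hc
      · push_neg at hc
        have h1 : x ≤ x + (m:ℝ) := by
          have : (0:ℝ) ≤ (m:ℝ) := Nat.cast_nonneg m
          linarith
        obtain ⟨l1, u1⟩ := ih x (x + m) h1 le_rfl
        obtain ⟨l2, u2⟩ := unit (x + m) y (le_of_lt hc) (by push_cast at hym ⊢; linarith)
        have er : (1/C) * (y - x) = (1/C) * (x + (m:ℝ) - x) + (1/C) * (y - (x + (m:ℝ))) := by ring
        have er2 : C * (y - x) = C * (x + (m:ℝ) - x) + C * (y - (x + (m:ℝ))) := by ring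
        exact ⟨by linarith, by linarith⟩
  -- conclusion
  intro x y
  rcases le_total x y with hxy | hxy
  · obtain ⟨l, u⟩ := all ⌈y - x⌉₊ x y hxy (by
      have := Nat.le_ceil (y - x); linarith)
    have e1 : |x - y| = y - x := by
      rw [abs_sub_comm]; exact abs_of_nonneg (by linarith)
    have e2 : |h x - h y| = h y - h x := by
      rw [abs_sub_comm]; exact abs_of_nonneg (by
        have := hmono.monotone hxy; linarith)
    rw [e1, e2]; exact ⟨l, u⟩
  · obtain ⟨l, u⟩ := all ⌈x - y⌉₊ y x hxy (by
      have := Nat.le_ceil (x - y); linarith)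
    have e1 : |x - y| = x - y := abs_of_nonneg (by linarith)
    have e2 : |h x - h y| = h x - h y := abs_of_nonneg (by
      have := hmono.monotone hxy; linarith)
    rw [e1, e2]; exact ⟨l, u⟩
end

section
/- Let M be a compact metric space, f : M → M continuous, and φ : M → ℝ continuous. Suppose ∫ φ dμ < λ for every f-invariant Borel probability measure μ. Then for every x ∈ M there exists n(x) ≥ 1 such that (1/n(x)) ∑_{i=0}^{n(x)-1} φ(fⁱ(x)) < λ. -/
open MeasureTheory Filter Topology Set
open scoped ENNReal NNReal

set_option linter.unusedSectionVars false

namespace Stmt4Aux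

noncomputable def UF : Ultrafilter ℕ := Ultrafilter.of Filter.atTop

lemma UF_le_atTop : (UF : Filter ℕ) ≤ Filter.atTop := Ultrafilter.of_le _

variable {M : Type*} [MetricSpace M] [CompactSpace M]

noncomputable def avg (f : M → M) (x : M) (g : M → ℝ) (n : ℕ) : ℝ :=
  (n : ℝ)⁻¹ * ∑ i ∈ Finset.range n, g (f^[i] x)

lemma avg_bound (f : M → M) (x : M) {g : M → ℝ} {C : ℝ} (hC0 : 0 ≤ C)
    (hC : ∀ y, |g y| ≤ C) (n : ℕ) : |avg f x g n| ≤ C := by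
  rcases Nat.eq_zero_or_pos n with rfl | hn
  · simpa [avg] using hC0
  · have h1 : |∑ i ∈ Finset.range n, g (f^[i] x)| ≤ n * C := by
      calc |∑ i ∈ Finset.range n, g (f^[i] x)| ≤ ∑ i ∈ Finset.range n, |g (f^[i] x)| :=
        Finset.abs_sum_le_sum_abs _ _
      _ ≤ ∑ _i ∈ Finset.range n, C := Finset.sum_le_sum fun i _ => hC _
      _ = n * C := by simp [mul_comm]
    have hn' : (0:ℝ) < n := by exact_mod_cast hn
    calc |avg f x g n| = (n:ℝ)⁻¹ * |∑ i ∈ Finset.range n, g (f^[i] x)| := by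
          rw [avg, abs_mul, abs_of_nonneg (by positivity)]
      _ ≤ (n:ℝ)⁻¹ * (n * C) := by
          apply mul_le_mul_of_nonneg_left h1 (by positivity)
      _ = C := by field_simp

lemma exists_bound {g : M → ℝ} (hg : Continuous g) : ∃ C, 0 ≤ C ∧ ∀ y, |g y| ≤ C := by
  obtain ⟨C, hC⟩ := isCompact_univ.exists_bound_of_continuousOn (f := g) hg.continuousOn
  exact ⟨max C 0, le_max_right _ _, fun y => le_trans (by simpa using hC y (mem_univ y))
    (le_max_left _ _)⟩

lemma exists_lim (f : M → M) (x : M) {g : M → ℝ} (hg : Continuous g) :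
    ∃ c, Tendsto (avg f x g) (UF : Filter ℕ) (𝓝 c) := by
  obtain ⟨C, hC0, hC⟩ := exists_bound hg
  have hmem : ∀ n, avg f x g n ∈ Icc (-C) C := fun n => abs_le.1 (avg_bound f x hC0 hC n)
  obtain ⟨c, _, hc⟩ := (isCompact_Icc (a := -C) (b := C)).ultrafilter_le_nhds
    (UF.map (avg f x g))
    (le_principal_iff.2 (Ultrafilter.mem_map.mpr (Eventually.of_forall hmem)))
  exact ⟨c, hc⟩

open scoped Classical in
noncomputable def L (f : M → M) (x : M) (g : M → ℝ) : ℝ :=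
  if h : ∃ c, Tendsto (avg f x g) (UF : Filter ℕ) (𝓝 c) then h.choose else 0

lemma tendsto_L (f : M → M) (x : M) {g : M → ℝ} (hg : Continuous g) :
    Tendsto (avg f x g) (UF : Filter ℕ) (𝓝 (L f x g)) := by
  classical
  rw [L, dif_pos (exists_lim f x hg)]
  exact (exists_lim f x hg).choose_spec

lemma L_eq (f : M → M) (x : M) {g : M → ℝ} (hg : Continuous g) {c : ℝ}
    (h : Tendsto (avg f x g) (UF : Filter ℕ) (𝓝 c)) : L f x g = c :=
  tendsto_nhds_unique (tendsto_L f x hg) h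


variable (f : M → M) (x : M)

lemma avg_add (g h : M → ℝ) (n : ℕ) :
    avg f x (fun y => g y + h y) n = avg f x g n + avg f x h n := by
  simp [avg, Finset.sum_add_distrib, mul_add]

lemma L_add {g h : M → ℝ} (hg : Continuous g) (hh : Continuous h) :
    L f x (fun y => g y + h y) = L f x g + L f x h := by
  refine L_eq f x (hg.add hh) ?_
  have := (tendsto_L f x hg).add (tendsto_L f x hh)
  exact Tendsto.congr (fun n => (avg_add f x g h n).symm) this

lemma avg_smul (c : ℝ) (g : M → ℝ) (n : ℕ) :
    avg f x (fun y => c * g y) n = c * avg f x g n := by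
  simp only [avg, Finset.mul_sum]
  congr 1; funext i; ring

lemma L_smul (c : ℝ) {g : M → ℝ} (hg : Continuous g) :
    L f x (fun y => c * g y) = c * L f x g := by
  refine L_eq f x (continuous_const.mul hg) ?_
  have := (tendsto_L f x hg).const_mul c
  exact Tendsto.congr (fun n => (avg_smul f x c g n).symm) this

lemma L_const (c : ℝ) : L f x (fun _ => c) = c := by
  refine L_eq f x continuous_const ?_
  have hev : ∀ᶠ n in (UF : Filter ℕ), avg f x (fun _ => c) n = c := by
    refine Eventually.filter_mono UF_le_atTop ?_
    filter_upwards [eventually_ge_atTop 1] with n hn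
    have hn' : (n:ℝ) ≠ 0 := by positivity
    simp [avg, hn']
  exact Tendsto.congr' (hev.mono fun n h => h.symm) tendsto_const_nhds

lemma L_mono {g h : M → ℝ} (hg : Continuous g) (hh : Continuous h)
    (hle : ∀ y, g y ≤ h y) : L f x g ≤ L f x h := by
  refine le_of_tendsto_of_tendsto' (tendsto_L f x hg) (tendsto_L f x hh) fun n => ?_
  unfold avg
  have : (0:ℝ) ≤ (n:ℝ)⁻¹ := by positivity
  exact mul_le_mul_of_nonneg_left (Finset.sum_le_sum fun i _ => hle _) this

lemma L_nonneg {g : M → ℝ} (hg : Continuous g) (hg0 : ∀ y, 0 ≤ g y) :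
    0 ≤ L f x g := by
  have := L_mono f x continuous_const hg hg0
  rwa [L_const] at this

lemma L_sum {s : Finset ℕ} {h : ℕ → M → ℝ} (hh : ∀ j, Continuous (h j)) :
    L f x (fun y => ∑ j ∈ s, h j y) = ∑ j ∈ s, L f x (h j) := by
  refine L_eq f x (by continuity) ?_
  have key : ∀ n, avg f x (fun y => ∑ j ∈ s, h j y) n = ∑ j ∈ s, avg f x (h j) n := by
    intro n
    simp [avg, Finset.mul_sum]
    rw [Finset.sum_comm]
  have := tendsto_finset_sum s (fun j _ => tendsto_L f x (hh j))
  exact Tendsto.congr (fun n => (key n).symm) this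

lemma L_comp (hf : Continuous f) {g : M → ℝ} (hg : Continuous g) :
    L f x (fun y => g (f y)) = L f x g := by
  obtain ⟨C, hC0, hC⟩ := exists_bound hg
  refine (L_eq f x (hg.comp hf) ?_).trans rfl
  have key : ∀ n, avg f x (fun y => g (f y)) n
      = avg f x g n + (n:ℝ)⁻¹ * (g (f^[n] x) - g x) := by
    intro n
    have : ∑ i ∈ Finset.range n, g (f^[i+1] x) - ∑ i ∈ Finset.range n, g (f^[i] x)
        = g (f^[n] x) - g (f^[0] x) := by
      rw [← Finset.sum_sub_distrib]
      exact Finset.sum_range_sub (fun i => g (f^[i] x)) n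
    have h2 : ∀ i, g (f (f^[i] x)) = g (f^[i+1] x) := fun i => by
      rw [Function.iterate_succ_apply']
    simp only [avg, h2, Function.iterate_zero_apply] at this ⊢
    rw [eq_comm]
    have hcalc : (∑ i ∈ Finset.range n, g (f^[i] x)) + (g (f^[n] x) - g x)
        = ∑ x_1 ∈ Finset.range n, g (f^[x_1 + 1] x) := by linarith
    calc (n:ℝ)⁻¹ * ∑ i ∈ Finset.range n, g (f^[i] x) + (n:ℝ)⁻¹ * (g (f^[n] x) - g x)
        = (n:ℝ)⁻¹ * ((∑ i ∈ Finset.range n, g (f^[i] x)) + (g (f^[n] x) - g x)) := by ring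
      _ = (n:ℝ)⁻¹ * ∑ x_1 ∈ Finset.range n, g (f^[x_1 + 1] x) := by rw [hcalc]
  have h0 : Tendsto (fun n : ℕ => (n:ℝ)⁻¹ * (g (f^[n] x) - g x)) atTop (𝓝 0) := by
    apply squeeze_zero_norm (a := fun n : ℕ => (n:ℝ)⁻¹ * (2*C))
    · intro n
      rw [norm_mul]
      apply mul_le_mul _ _ (norm_nonneg _) (by positivity)
      · simp [abs_of_nonneg (by positivity : (0:ℝ) ≤ (n:ℝ)⁻¹)]
      · calc ‖g (f^[n] x) - g x‖ ≤ ‖g (f^[n] x)‖ + ‖g x‖ := norm_sub_le _ _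
          _ ≤ C + C := add_le_add (hC _) (hC _)
          _ = 2*C := by ring
    · have := tendsto_inv_atTop_nhds_zero_nat.mul_const (2*C)
      simpa using this
  have : Tendsto (fun n => avg f x g n + (n:ℝ)⁻¹ * (g (f^[n] x) - g x))
      (UF : Filter ℕ) (𝓝 (L f x g + 0)) :=
    (tendsto_L f x hg).add (h0.mono_left UF_le_atTop)
  rw [add_zero] at this
  exact Tendsto.congr (fun n => (key n).symm) this


/-- Feasible test functions for a set `K`. -/
def Feas (K : Set M) : Set (M → ℝ) :=
  {u | Continuous u ∧ (∀ y, 0 ≤ u y) ∧ ∀ y ∈ K, 1 ≤ u y}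

lemma one_mem_Feas (K : Set M) : (fun _ => (1:ℝ)) ∈ Feas K :=
  ⟨continuous_const, fun _ => zero_le_one, fun _ _ => le_rfl⟩

/-- The `c₀` content of a set. -/
noncomputable def c0 (K : Set M) : ℝ := sInf (L f x '' Feas K)

lemma Feas_nonempty (K : Set M) : (L f x '' Feas K).Nonempty :=
  ⟨_, (fun _ => (1:ℝ)), one_mem_Feas K, rfl⟩

lemma Feas_bddBelow (K : Set M) : BddBelow (L f x '' Feas K) := by
  refine ⟨0, ?_⟩
  rintro r ⟨u, hu, rfl⟩
  exact L_nonneg f x hu.1 hu.2.1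

lemma c0_nonneg (K : Set M) : 0 ≤ c0 f x K := by
  refine le_csInf (Feas_nonempty f x K) ?_
  rintro r ⟨u, hu, rfl⟩
  exact L_nonneg f x hu.1 hu.2.1

lemma c0_le {K : Set M} {u : M → ℝ} (hu : u ∈ Feas K) : c0 f x K ≤ L f x u :=
  csInf_le (Feas_bddBelow f x K) ⟨u, hu, rfl⟩

lemma le_c0 {K : Set M} {r : ℝ} (h : ∀ u ∈ Feas K, r ≤ L f x u) : r ≤ c0 f x K := by
  refine le_csInf (Feas_nonempty f x K) ?_
  rintro s ⟨u, hu, rfl⟩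
  exact h u hu

lemma c0_mono {K₁ K₂ : Set M} (h : K₁ ⊆ K₂) : c0 f x K₁ ≤ c0 f x K₂ := by
  refine csInf_le_csInf (Feas_bddBelow f x K₁) (Feas_nonempty f x K₂) ?_
  rintro r ⟨u, hu, rfl⟩
  exact ⟨u, ⟨hu.1, hu.2.1, fun y hy => hu.2.2 y (h hy)⟩, rfl⟩

lemma c0_univ : c0 f x univ = 1 := by
  apply le_antisymm
  · have := c0_le f x (one_mem_Feas (univ : Set M))
    rwa [L_const] at this
  · refine le_c0 f x fun u hu => ?_
    have := L_mono f x continuous_const hu.1 (fun y => hu.2.2 y (mem_univ y))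
    rwa [L_const] at this

lemma c0_union_le (K₁ K₂ : Set M) : c0 f x (K₁ ∪ K₂) ≤ c0 f x K₁ + c0 f x K₂ := by
  rw [← sub_le_iff_le_add']
  refine le_c0 f x fun u hu => ?_
  rw [sub_le_iff_le_add', ← sub_le_iff_le_add]
  refine le_c0 f x fun v hv => ?_
  rw [sub_le_iff_le_add]
  have hmem : (fun y => v y + u y) ∈ Feas (K₁ ∪ K₂) := by
    refine ⟨hv.1.add hu.1, fun y => add_nonneg (hv.2.1 y) (hu.2.1 y), ?_⟩
    rintro y (hy | hy)
    · exact le_add_of_le_of_nonneg (hv.2.2 y hy) (hu.2.1 y)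
    · exact le_add_of_nonneg_of_le (hv.2.1 y) (hu.2.2 y hy)
  calc c0 f x (K₁ ∪ K₂) ≤ L f x (fun y => v y + u y) := c0_le f x hmem
    _ = L f x v + L f x u := L_add f x hv.1 hu.1

lemma c0_disjoint (K₁ K₂ : Set M) (hd : Disjoint K₁ K₂) (h₁ : IsClosed K₁)
    (h₂ : IsClosed K₂) : c0 f x K₁ + c0 f x K₂ ≤ c0 f x (K₁ ∪ K₂) := by
  refine le_c0 f x fun w hw => ?_
  obtain ⟨v, hv0, hv1, hv01⟩ := exists_continuous_zero_one_of_isClosed h₂ h₁ hd.symm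
  have hv : Continuous v := v.continuous
  have hu1 : (fun y => w y * v y) ∈ Feas K₁ := by
    refine ⟨hw.1.mul hv, fun y => mul_nonneg (hw.2.1 y) (hv01 y).1, fun y hy => ?_⟩
    have := hv1 hy
    simp only [ContinuousMap.coe_coe, Pi.one_apply] at this
    show 1 ≤ w y * v y
    rw [this, mul_one]
    exact hw.2.2 y (Or.inl hy)
  have hu2 : (fun y => w y * (1 - v y)) ∈ Feas K₂ := by
    refine ⟨hw.1.mul (continuous_const.sub hv), fun y =>
      mul_nonneg (hw.2.1 y) (by linarith [(hv01 y).2]), fun y hy => ?_⟩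
    have := hv0 hy
    simp only [ContinuousMap.coe_coe, Pi.zero_apply] at this
    show 1 ≤ w y * (1 - v y)
    rw [this]
    simpa using hw.2.2 y (Or.inr hy)
  have hsum : L f x (fun y => w y * v y) + L f x (fun y => w y * (1 - v y)) = L f x w := by
    rw [← L_add f x (g := fun y => w y * v y) (h := fun y => w y * (1 - v y)) (hw.1.mul hv)
      (hw.1.mul (continuous_const.sub hv))]
    congr 1
    funext y; ring
  calc c0 f x K₁ + c0 f x K₂ ≤ _ + _ := add_le_add (c0_le f x hu1) (c0_le f x hu2)
    _ = L f x w := hsum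

lemma c0_preimage_le (hf : Continuous f) (K : Set M) : c0 f x (f ⁻¹' K) ≤ c0 f x K := by
  refine le_c0 f x fun u hu => ?_
  have hmem : (fun y => u (f y)) ∈ Feas (f ⁻¹' K) :=
    ⟨hu.1.comp hf, fun y => hu.2.1 _, fun y hy => hu.2.2 _ hy⟩
  calc c0 f x (f ⁻¹' K) ≤ L f x (fun y => u (f y)) := c0_le f x hmem
    _ = L f x u := L_comp f x hf hu.1

open TopologicalSpace in
/-- The content associated to the functional `L`. -/
noncomputable def con : Content M where
  toFun K := (c0 f x K).toNNReal
  mono' K₁ K₂ h := Real.toNNReal_mono (c0_mono f x h)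
  sup_disjoint' K₁ K₂ hd h₁ h₂ := by
    show (c0 f x ((K₁ ⊔ K₂ : Compacts M) : Set M)).toNNReal
      = (c0 f x (K₁ : Set M)).toNNReal + (c0 f x (K₂ : Set M)).toNNReal
    rw [← Real.toNNReal_add (c0_nonneg f x _) (c0_nonneg f x _)]
    congr 1
    have hco : ((K₁ ⊔ K₂ : Compacts M) : Set M) = (K₁ : Set M) ∪ K₂ := rfl
    rw [hco]
    exact le_antisymm (c0_union_le f x _ _) (c0_disjoint f x _ _ hd h₁ h₂)
  sup_le' K₁ K₂ := by
    show (c0 f x ((K₁ ⊔ K₂ : Compacts M) : Set M)).toNNReal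
      ≤ (c0 f x (K₁ : Set M)).toNNReal + (c0 f x (K₂ : Set M)).toNNReal
    rw [← Real.toNNReal_add (c0_nonneg f x _) (c0_nonneg f x _)]
    exact Real.toNNReal_mono (c0_union_le f x _ _)


section Meas

open TopologicalSpace

variable [MeasurableSpace M] [BorelSpace M]

/-- The candidate invariant measure. -/
noncomputable def mu : Measure M := (con f x).measure

lemma con_le_mu_of_open {K V : Set M} (hK : IsCompact K) (hV : IsOpen V) (hKV : K ⊆ V) :
    ((con f x).toFun ⟨K, hK⟩ : ℝ≥0∞) ≤ mu f x V := by
  rw [mu, (con f x).measure_apply hV.measurableSet,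
    (con f x).outerMeasure_of_isOpen V hV]
  exact (con f x).le_innerContent ⟨K, hK⟩ ⟨V, hV⟩ hKV

lemma mu_univ : mu f x (univ : Set M) = 1 := by
  rw [mu, (con f x).measure_apply MeasurableSet.univ,
    (con f x).outerMeasure_of_isOpen univ isOpen_univ]
  have h1 : (con f x).innerContent ⟨univ, isOpen_univ⟩ ≤ (con f x) ⟨univ, isCompact_univ⟩ :=
    (con f x).innerContent_le _ _ (subset_univ _)
  have h2 : ((con f x) ⟨univ, isCompact_univ⟩ : ℝ≥0∞)
      ≤ (con f x).innerContent ⟨univ, isOpen_univ⟩ :=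
    (con f x).le_innerContent _ _ (subset_univ _)
  have h3 : ((con f x) ⟨univ, isCompact_univ⟩ : ℝ≥0∞) = 1 := by
    show ((con f x).toFun ⟨univ, isCompact_univ⟩ : ℝ≥0∞) = 1
    have : (con f x).toFun ⟨univ, isCompact_univ⟩ = 1 := by
      show (c0 f x univ).toNNReal = 1
      rw [c0_univ]
      simp
    rw [this]
    simp
  rw [← h3]
  exact le_antisymm (h3 ▸ h1) h2

instance mu_prob : IsProbabilityMeasure (mu f x) := ⟨mu_univ f x⟩

lemma outer_preimage_le (hf : Continuous f) (A : Set M) :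
    (con f x).outerMeasure (f ⁻¹' A) ≤ (con f x).outerMeasure A := by
  conv_rhs => rw [Content.outerMeasure_eq_iInf]
  refine le_iInf fun V => le_iInf fun hV => le_iInf fun hAV => ?_
  have step : (con f x).outerMeasure (f ⁻¹' A) ≤ (con f x).innerContent ⟨f ⁻¹' V, hV.preimage hf⟩ := by
    rw [← (con f x).outerMeasure_of_isOpen _ (hV.preimage hf)]
    exact measure_mono (preimage_mono hAV)
  refine step.trans ?_
  rw [Content.innerContent]
  refine iSup₂_le fun K hK => ?_
  have hfK : IsCompact (f '' K) := K.isCompact.image hf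
  have hfKV : f '' K ⊆ V := image_subset_iff.2 hK
  have hKc : IsCompact (f ⁻¹' (f '' K)) := (hfK.isClosed.preimage hf).isCompact
  calc ((con f x) K : ℝ≥0∞) ≤ (con f x) ⟨f ⁻¹' (f '' K), hKc⟩ :=
        (con f x).mono _ _ (subset_preimage_image f K)
    _ ≤ (con f x) ⟨f '' K, hfK⟩ := by
        show ((con f x).toFun ⟨f ⁻¹' (f '' K), hKc⟩ : ℝ≥0∞) ≤ ((con f x).toFun ⟨f '' K, hfK⟩ : ℝ≥0∞)
        rw [ENNReal.coe_le_coe]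
        show (c0 f x (f ⁻¹' (f '' K))).toNNReal ≤ (c0 f x (f '' K)).toNNReal
        exact Real.toNNReal_mono (c0_preimage_le f x hf _)
    _ ≤ (con f x).innerContent ⟨V, hV⟩ := (con f x).le_innerContent _ _ hfKV

lemma mu_preimage_le (hf : Continuous f) {s : Set M} (hs : MeasurableSet s) :
    mu f x (f ⁻¹' s) ≤ mu f x s := by
  rw [mu, (con f x).measure_apply (hf.measurable hs), (con f x).measure_apply hs]
  exact outer_preimage_le f x hf s

lemma mu_invariant (hf : Continuous f) : MeasurePreserving f (mu f x) (mu f x) := by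
  refine ⟨hf.measurable, ?_⟩
  ext s hs
  rw [Measure.map_apply hf.measurable hs]
  refine le_antisymm (mu_preimage_le f x hf hs) ?_
  have h2 := mu_preimage_le f x hf hs.compl
  rw [preimage_compl] at h2
  have e1 : mu f x (f ⁻¹' s)ᶜ = 1 - mu f x (f ⁻¹' s) := by
    rw [measure_compl (hf.measurable hs) (measure_ne_top _ _), mu_univ]
  have e2 : mu f x sᶜ = 1 - mu f x s := by
    rw [measure_compl hs (measure_ne_top _ _), mu_univ]
  rw [e1, e2] at h2
  have hle : mu f x s ≤ 1 := prob_le_one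
  have hle2 : mu f x (f ⁻¹' s) ≤ 1 := prob_le_one
  exact (ENNReal.sub_le_sub_iff_left hle ENNReal.one_ne_top).1 h2


lemma integrable_cont {g : M → ℝ} (hg : Continuous g) : Integrable g (mu f x) := by
  have hcs : HasCompactSupport g :=
    IsCompact.of_isClosed_subset isCompact_univ (isClosed_tsupport g) (subset_univ _)
  exact hg.integrable_of_hasCompactSupport hcs

lemma toReal_mu_le_one (V : Set M) : (mu f x V).toReal ≤ 1 := by
  have h1 : mu f x V ≤ 1 := prob_le_one
  calc (mu f x V).toReal ≤ (1 : ℝ≥0∞).toReal :=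
    ENNReal.toReal_mono ENNReal.one_ne_top h1
  _ = 1 := ENNReal.toReal_one

lemma c0_le_toReal_mu {K V : Set M} (hK : IsCompact K) (hV : IsOpen V) (hKV : K ⊆ V) :
    c0 f x K ≤ (mu f x V).toReal := by
  have h := con_le_mu_of_open f x hK hV hKV
  have h2 : (((c0 f x K).toNNReal : ℝ≥0∞)).toReal ≤ (mu f x V).toReal :=
    ENNReal.toReal_mono (measure_ne_top _ _) h
  rwa [ENNReal.coe_toReal, Real.coe_toNNReal _ (c0_nonneg f x K)] at h2

attribute [irreducible] mu con c0 L UF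

set_option maxHeartbeats 1000000 in
lemma L_le_integral_nonneg {g : M → ℝ} (hg : Continuous g) (hg0 : ∀ y, 0 ≤ g y) :
    L f x g ≤ ∫ y, g y ∂(mu f x) := by
  refine le_of_forall_pos_le_add fun ε hε => ?_
  set δ : ℝ := ε / 2 with hδdef
  have hδ : 0 < δ := by positivity
  obtain ⟨C, hC0, hC⟩ := exists_bound hg
  set m₀ : ℕ := ⌈C / δ⌉₊ with hm₀
  set m : ℕ := m₀ + 2 with hm
  have hCm : C ≤ (m : ℝ) * δ := by
    have h1 : C / δ ≤ (m₀ : ℝ) := Nat.le_ceil _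
    have h2 : (m₀ : ℝ) ≤ m := by exact_mod_cast Nat.le_add_right m₀ 2
    calc C = (C / δ) * δ := by field_simp
      _ ≤ (m : ℝ) * δ := mul_le_mul_of_nonneg_right (h1.trans h2) hδ.le
  -- the layer functions
  set hj : ℕ → M → ℝ := fun j y => min (g y) (((j:ℝ) + 1) * δ) - min (g y) ((j:ℝ) * δ)
    with hhjdef
  have hhjcont : ∀ j, Continuous (hj j) :=
    fun j => (hg.min continuous_const).sub (hg.min continuous_const)
  -- telescoping
  have htel : ∀ y, ∑ j ∈ Finset.range m, hj j y = g y := by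
    intro y
    have h1 : ∀ j : ℕ, hj j y
        = (fun i : ℕ => min (g y) ((i:ℝ) * δ)) (j+1) - (fun i : ℕ => min (g y) ((i:ℝ) * δ)) j := by
      intro j
      simp only [hhjdef]
      push_cast
      ring_nf
    calc ∑ j ∈ Finset.range m, hj j y
        = ∑ j ∈ Finset.range m, ((fun i : ℕ => min (g y) ((i:ℝ) * δ)) (j+1)
            - (fun i : ℕ => min (g y) ((i:ℝ) * δ)) j) := by
          exact Finset.sum_congr rfl fun j _ => h1 j
      _ = min (g y) ((m:ℝ) * δ) - min (g y) ((0:ℕ) * δ) :=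
          Finset.sum_range_sub (fun i : ℕ => min (g y) ((i:ℝ) * δ)) m
      _ = g y := by
          rw [min_eq_left ((abs_le.1 (hC y)).2.trans hCm)]
          norm_num
          exact hg0 y
  -- the compact and open layer sets
  have hKc : ∀ j : ℕ, IsCompact {y : M | (j:ℝ) * δ ≤ g y} :=
    fun j => (isClosed_le continuous_const hg).isCompact
  have hVo : ∀ t : ℝ, IsOpen {y : M | t < g y} := fun t => isOpen_lt continuous_const hg
  -- per-layer bound
  have hlayer : ∀ j : ℕ, L f x (hj j) ≤ δ * (mu f x {y : M | (j:ℝ) * δ - δ < g y}).toReal := by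
    intro j
    have hfeas : ∀ u ∈ Feas (M := M) {y : M | (j:ℝ) * δ ≤ g y}, L f x (hj j) ≤ δ * L f x u := by
      intro u hu
      have hpt : ∀ y, hj j y ≤ δ * u y := by
        intro y
        rcases le_or_gt ((j:ℝ) * δ) (g y) with hy | hy
        · have h1 : hj j y ≤ δ := by
            have : min (g y) (((j:ℝ) + 1) * δ) ≤ min (g y) ((j:ℝ) * δ) + δ := by
              have e : ((j:ℝ) + 1) * δ = (j:ℝ) * δ + δ := by ring
              rw [e]
              calc min (g y) ((j:ℝ) * δ + δ) ≤ min (g y + δ) ((j:ℝ) * δ + δ) :=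
                min_le_min (le_add_of_nonneg_right hδ.le) le_rfl
              _ = min (g y) ((j:ℝ) * δ) + δ := by rw [min_add_add_right]
            simp only [hhjdef]
            linarith
          have h2 : δ ≤ δ * u y := le_mul_of_one_le_right hδ.le (hu.2.2 y hy)
          linarith
        · have h1 : hj j y = 0 := by
            simp only [hhjdef]
            rw [min_eq_left, min_eq_left] <;> [skip; linarith; nlinarith [hδ.le]]
            ring
          rw [h1]
          exact mul_nonneg hδ.le (hu.2.1 y)
      calc L f x (hj j) ≤ L f x (fun y => δ * u y) :=
        L_mono f x (hhjcont j) (continuous_const.mul hu.1) hpt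
      _ = δ * L f x u := L_smul f x δ hu.1
    have hc0 : L f x (hj j) ≤ δ * c0 f x {y : M | (j:ℝ) * δ ≤ g y} := by
      have hdiv : L f x (hj j) / δ ≤ c0 f x {y : M | (j:ℝ) * δ ≤ g y} :=
        le_c0 f x fun u hu => (div_le_iff₀' hδ).2 (hfeas u hu)
      calc L f x (hj j) = δ * (L f x (hj j) / δ) := by field_simp
        _ ≤ δ * c0 f x {y : M | (j:ℝ) * δ ≤ g y} := mul_le_mul_of_nonneg_left hdiv hδ.le
    refine hc0.trans (mul_le_mul_of_nonneg_left ?_ hδ.le)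
    refine c0_le_toReal_mu f x (hKc j) (hVo _) ?_
    intro y hy
    simp only [mem_setOf_eq] at hy ⊢
    linarith
  -- integral lower bound
  have key : ∑ i ∈ Finset.range m₀, δ * (mu f x {y : M | ((i:ℝ) + 1) * δ < g y}).toReal
      ≤ ∫ y, g y ∂(mu f x) := by
    classical
    set s : M → ℝ := fun y =>
      ∑ i ∈ Finset.range m₀, ({y : M | ((i:ℝ) + 1) * δ < g y}).indicator (fun _ => δ) y
      with hsdef
    have hmeas : ∀ i : ℕ, MeasurableSet {y : M | ((i:ℝ) + 1) * δ < g y} :=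
      fun i => (hVo _).measurableSet
    have hint : ∀ i : ℕ,
        Integrable (({y : M | ((i:ℝ) + 1) * δ < g y}).indicator (fun _ => δ)) (mu f x) :=
      fun i => (integrable_const δ).indicator (hmeas i)
    have hints : Integrable s (mu f x) := integrable_finset_sum _ fun i _ => hint i
    have hseq : ∫ y, s y ∂(mu f x)
        = ∑ i ∈ Finset.range m₀, δ * (mu f x {y : M | ((i:ℝ) + 1) * δ < g y}).toReal := by
      rw [hsdef]
      rw [integral_finset_sum _ fun i _ => hint i]
      refine Finset.sum_congr rfl fun i _ => ?_
      rw [integral_indicator_const _ (hmeas i), smul_eq_mul, mul_comm, measureReal_def]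
    have hsle : ∀ y, s y ≤ g y := by
      intro y
      have hcard : s y
          = ((Finset.range m₀).filter (fun i : ℕ => ((i:ℝ) + 1) * δ < g y)).card * δ := by
        rw [hsdef]
        simp only [indicator_apply, mem_setOf_eq]
        rw [Finset.sum_ite, Finset.sum_const, Finset.sum_const_zero, add_zero, nsmul_eq_mul]
      rw [hcard]
      have hsub : (Finset.range m₀).filter (fun i : ℕ => ((i:ℝ) + 1) * δ < g y)
          ⊆ Finset.range ⌊g y / δ⌋₊ := by
        intro i hi
        rw [Finset.mem_filter] at hi
        rw [Finset.mem_range]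
        have h1 : ((i:ℝ) + 1) ≤ g y / δ := le_of_lt ((lt_div_iff₀ hδ).2 hi.2)
        have h2 : (i + 1 : ℕ) ≤ ⌊g y / δ⌋₊ := Nat.le_floor (by push_cast; linarith)
        omega
      have hcle : (((Finset.range m₀).filter (fun i : ℕ => ((i:ℝ) + 1) * δ < g y)).card : ℝ)
          ≤ (⌊g y / δ⌋₊ : ℝ) := by
        have h := (Finset.card_le_card hsub).trans_eq (Finset.card_range _)
        exact_mod_cast h
      calc (((Finset.range m₀).filter (fun i : ℕ => ((i:ℝ) + 1) * δ < g y)).card : ℝ) * δ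
          ≤ (⌊g y / δ⌋₊ : ℝ) * δ := mul_le_mul_of_nonneg_right hcle hδ.le
        _ ≤ (g y / δ) * δ :=
            mul_le_mul_of_nonneg_right (Nat.floor_le (div_nonneg (hg0 y) hδ.le)) hδ.le
        _ = g y := by field_simp
    calc ∑ i ∈ Finset.range m₀, δ * (mu f x {y : M | ((i:ℝ) + 1) * δ < g y}).toReal
        = ∫ y, s y ∂(mu f x) := hseq.symm
      _ ≤ ∫ y, g y ∂(mu f x) := integral_mono hints (integrable_cont f x hg) hsle
  -- assembling
  have hLg : L f x g = ∑ j ∈ Finset.range m, L f x (hj j) := by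
    have : L f x g = L f x (fun y => ∑ j ∈ Finset.range m, hj j y) := by
      congr 1
      funext y
      rw [htel]
    rw [this, L_sum f x hhjcont]
  have hstep : L f x g ≤ ∑ j ∈ Finset.range m, δ * (mu f x {y : M | (j:ℝ) * δ - δ < g y}).toReal := by
    rw [hLg]
    exact Finset.sum_le_sum fun j _ => hlayer j
  set F : ℕ → ℝ := fun j => δ * (mu f x {y : M | (j:ℝ) * δ - δ < g y}).toReal with hF
  have hsplit : ∑ j ∈ Finset.range m, F j
      = (∑ j ∈ Finset.range m₀, F (j + 2)) + F 1 + F 0 := by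
    rw [hm, Finset.sum_range_succ' F (m₀ + 1), Finset.sum_range_succ' (fun i => F (i + 1)) m₀]
  have hF2 : ∀ j : ℕ, F (j + 2) = δ * (mu f x {y : M | ((j:ℝ) + 1) * δ < g y}).toReal := by
    intro j
    have hset : {y : M | ((j + 2 : ℕ):ℝ) * δ - δ < g y} = {y : M | ((j:ℝ) + 1) * δ < g y} := by
      ext y
      simp only [mem_setOf_eq]
      push_cast
      constructor <;> intro h <;> linarith
    simp only [hF]
    rw [hset]
  have hF0 : F 0 ≤ δ := by
    simp only [hF]
    calc δ * (mu f x {y : M | ((0:ℕ):ℝ) * δ - δ < g y}).toReal ≤ δ * 1 :=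
      mul_le_mul_of_nonneg_left (toReal_mu_le_one f x _) hδ.le
    _ = δ := mul_one δ
  have hF1 : F 1 ≤ δ := by
    simp only [hF]
    calc δ * (mu f x {y : M | ((1:ℕ):ℝ) * δ - δ < g y}).toReal ≤ δ * 1 :=
      mul_le_mul_of_nonneg_left (toReal_mu_le_one f x _) hδ.le
    _ = δ := mul_one δ
  calc L f x g ≤ ∑ j ∈ Finset.range m, F j := hstep
    _ = (∑ j ∈ Finset.range m₀, F (j + 2)) + F 1 + F 0 := hsplit
    _ ≤ (∑ j ∈ Finset.range m₀, δ * (mu f x {y : M | ((j:ℝ) + 1) * δ < g y}).toReal) + δ + δ := by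
        refine add_le_add (add_le_add (le_of_eq (Finset.sum_congr rfl fun j _ => hF2 j)) hF1) hF0
    _ ≤ ∫ y, g y ∂(mu f x) + δ + δ := by
        refine add_le_add (add_le_add key le_rfl) le_rfl
    _ = ∫ y, g y ∂(mu f x) + ε := by rw [hδdef]; ring


lemma L_le_integral {g : M → ℝ} (hg : Continuous g) : L f x g ≤ ∫ y, g y ∂(mu f x) := by
  obtain ⟨C, hC0, hC⟩ := exists_bound hg
  have h1 : L f x (fun y => g y + C) ≤ ∫ y, (g y + C) ∂(mu f x) :=
    L_le_integral_nonneg f x (hg.add continuous_const)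
      (fun y => by linarith [(abs_le.1 (hC y)).1])
  rw [L_add f x hg continuous_const, L_const] at h1
  rw [integral_add (integrable_cont f x hg) (integrable_const C), integral_const] at h1
  simp only [probReal_univ, ENNReal.toReal_one, one_smul] at h1
  linarith

end Meas

end Stmt4Aux


/-- If `∫ φ dμ < λ` for every `f`-invariant Borel probability measure `μ` on a
compact metric space `M`, then every point `x` has some Birkhoff average of
`φ` strictly below `λ`. -/
theorem stmt4 {M : Type*} [MetricSpace M] [CompactSpace M]
    [MeasurableSpace M] [BorelSpace M]
    (f : M → M) (hf : Continuous f) (φ : M → ℝ) (hφ : Continuous φ) (lam : ℝ)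
    (hint : ∀ μ : Measure M, IsProbabilityMeasure μ →
      MeasurePreserving f μ μ → (∫ x, φ x ∂μ) < lam) :
    ∀ x : M, ∃ n : ℕ, 1 ≤ n ∧
      (1 / (n : ℝ)) * ∑ i ∈ Finset.range n, φ (f^[i] x) < lam := by
  intro x
  by_contra hcon
  push_neg at hcon
  have hx : ∀ᶠ n in (Stmt4Aux.UF : Filter ℕ), lam ≤ Stmt4Aux.avg f x φ n := by
    refine Filter.Eventually.filter_mono Stmt4Aux.UF_le_atTop ?_
    filter_upwards [Filter.eventually_ge_atTop 1] with n hn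
    simpa [Stmt4Aux.avg, one_div] using hcon n hn
  have hL : lam ≤ Stmt4Aux.L f x φ := ge_of_tendsto (Stmt4Aux.tendsto_L f x hφ) hx
  have hInt := Stmt4Aux.L_le_integral f x hφ
  have hmp := Stmt4Aux.mu_invariant f x hf
  have hlt := hint (Stmt4Aux.mu f x) (Stmt4Aux.mu_prob f x) hmp
  linarith
end

section
/- Let M be a compact metric space, f : M → M continuous, and φ : M → ℝ continuous. Suppose ∫ φ dμ < λ for every f-invariant Borel probability measure μ. Then there exists N ≥ 1 such that for all n ≥ N and all x ∈ M, (1/n) ∑_{i=0}^{n-1} φ(fⁱ(x)) < λ. -/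
open MeasureTheory

namespace KBAux

open Filter Topology Set TopologicalSpace BoundedContinuousFunction NNReal ENNReal

variable {M : Type*} [MetricSpace M] [CompactSpace M]

/-- Convert a bounded continuous `ℝ≥0`-valued function into a real continuous map. -/
def toRealCM (F : CompactlySupportedContinuousMap M ℝ≥0) : C(M, ℝ) :=
  ⟨fun x => (F x : ℝ), NNReal.continuous_coe.comp F.continuous⟩

@[simp] lemma toRealCM_apply (F : CompactlySupportedContinuousMap M ℝ≥0) (x : M) : toRealCM F x = (F x : ℝ) := rfl

section Lam

variable (L : C(M, ℝ) → ℝ)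
variable (hadd : ∀ g h : C(M, ℝ), L (g + h) = L g + L h)
variable (hsmul : ∀ (c : ℝ) (g : C(M, ℝ)), L (c • g) = c * L g)
variable (hpos : ∀ g : C(M, ℝ), (∀ x, 0 ≤ g x) → 0 ≤ L g)

/-- The `ℝ≥0`-linear functional associated to a positive linear functional on `C(M,ℝ)`. -/
def mkLam : (CompactlySupportedContinuousMap M ℝ≥0) →ₗ[ℝ≥0] ℝ≥0 where
  toFun F := ⟨L (toRealCM F), hpos _ fun x => (F x).2⟩
  map_add' F G := Subtype.ext (by
    show L (toRealCM (F + G)) = L (toRealCM F) + L (toRealCM G)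
    have h1 : toRealCM (F + G) = toRealCM F + toRealCM G := by
      ext x; simp [toRealCM]
    rw [h1, hadd])
  map_smul' c F := Subtype.ext (by
    show L (toRealCM (c • F)) = (c : ℝ) * L (toRealCM F)
    have h1 : toRealCM (c • F) = (c : ℝ) • toRealCM F := by
      ext x; simp [toRealCM, NNReal.smul_def]
    rw [h1, hsmul])

lemma mkLam_coe (F : CompactlySupportedContinuousMap M ℝ≥0) :
    ((mkLam L hadd hsmul hpos F : ℝ≥0) : ℝ) = L (toRealCM F) := rfl

end Lam

section Content

variable (Λ : (CompactlySupportedContinuousMap M ℝ≥0) →ₗ[ℝ≥0] ℝ≥0)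

/-- Monotonicity of a positive `ℝ≥0`-linear functional. -/
lemma lam_mono (F G : CompactlySupportedContinuousMap M ℝ≥0) (h : ∀ x, F x ≤ G x) : Λ F ≤ Λ G := by
  set D : CompactlySupportedContinuousMap M ℝ≥0 := CompactlySupportedContinuousMap.continuousMapEquiv ⟨fun x => G x - F x, G.continuous.sub F.continuous⟩ with hD
  have hDx : ∀ x, D x = G x - F x := fun _ => rfl
  have h1 : F + D = G := by
    ext x
    rw [CompactlySupportedContinuousMap.add_apply, hDx, NNReal.coe_add, NNReal.coe_sub (h x)]
    ring
  calc Λ F ≤ Λ F + Λ D := le_self_add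
  _ = Λ (F + D) := (map_add Λ F D).symm
  _ = Λ G := by rw [h1]

lemma riesz_sup_disjoint (K₁ K₂ : Compacts M) (hd : Disjoint (K₁ : Set M) (K₂ : Set M)) :
    rieszContentAux Λ (K₁ ⊔ K₂) = rieszContentAux Λ K₁ + rieszContentAux Λ K₂ := by
  exact rieszContentAux_union Λ hd

/-- The Riesz content associated to a positive `ℝ≥0`-linear functional. -/
noncomputable def rieszContent : Content M where
  toFun := rieszContentAux Λ
  mono' K₁ K₂ h := rieszContentAux_mono Λ h
  sup_disjoint' K₁ K₂ hd _ _ := riesz_sup_disjoint Λ K₁ K₂ hd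
  sup_le' K₁ K₂ := rieszContentAux_sup_le Λ K₁ K₂

lemma rieszContent_regular : (rieszContent Λ).ContentRegular := by
  intro K
  refine le_antisymm (le_iInf fun K' => le_iInf fun hK' => ?_) ?_
  · exact ENNReal.coe_le_coe.2
      (rieszContentAux_mono Λ (hK'.trans interior_subset))
  · refine ENNReal.le_of_forall_pos_le_add fun ε hε _ => ?_
    obtain ⟨F, hF1, hFΛ⟩ := exists_lt_rieszContentAux_add_pos Λ K (half_pos hε)
    set A := rieszContentAux Λ K with hA
    have hden : (0 : ℝ≥0) < A + ε := add_pos_of_nonneg_of_pos zero_le hε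
    have hnum : (0 : ℝ≥0) < A + ε / 2 :=
      add_pos_of_nonneg_of_pos zero_le (half_pos hε)
    set c : ℝ≥0 := (A + ε / 2) / (A + ε) with hc
    have hcpos : 0 < c := div_pos hnum hden
    have hclt1 : c < 1 := (div_lt_one hden).2 (add_lt_add_right (NNReal.half_lt_self hε.ne') A)
    set K' : Compacts M := ⟨{x | c ≤ F x}, (isClosed_le continuous_const F.continuous).isCompact⟩
      with hK'
    have hKK' : (K : Set M) ⊆ interior (K' : Set M) := by
      have hopen : IsOpen {x : M | c < F x} := by
        exact isOpen_lt continuous_const F.continuous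
      have hsub : {x : M | c < F x} ⊆ (K' : Set M) := fun x hx => show c ≤ F x from le_of_lt hx
      have hKsub : (K : Set M) ⊆ {x : M | c < F x} := fun x hx =>
        lt_of_lt_of_le hclt1 (hF1 x hx)
      exact hKsub.trans (interior_maximal hsub hopen)
    have hK'le : rieszContentAux Λ K' ≤ A + ε := by
      have h1 : rieszContentAux Λ K' ≤ Λ (c⁻¹ • F) := by
        refine rieszContentAux_le Λ fun x hx => ?_
        have : (c⁻¹ • F) x = c⁻¹ * F x := rfl
        rw [this, ← inv_mul_cancel₀ hcpos.ne']
        exact mul_le_mul_right hx _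
      have h2 : Λ (c⁻¹ • F) = c⁻¹ * Λ F := by
        rw [_root_.map_smul]; rfl
      have h3 : c⁻¹ * Λ F ≤ c⁻¹ * (A + ε / 2) := mul_le_mul_right hFΛ.le _
      have h4 : c⁻¹ * (A + ε / 2) = A + ε := by
        rw [hc, inv_div, div_mul_cancel₀ _ hnum.ne']
      exact h1.trans (h2.le.trans (h3.trans_eq h4))
    calc (⨅ (K'' : Compacts M) (_ : (K : Set M) ⊆ interior (K'' : Set M)),
          (rieszContent Λ) K'')
        ≤ (rieszContent Λ) K' := by
          exact (iInf_le _ K').trans (iInf_le _ hKK')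
    _ ≤ ((A + ε : ℝ≥0) : ℝ≥0∞) := ENNReal.coe_le_coe.2 hK'le
    _ = (rieszContent Λ) K + ε := by
        rw [ENNReal.coe_add]; rfl

end Content

variable [MeasurableSpace M] [BorelSpace M]

/-- Krylov–Bogolyubov-type construction: a normalized positive invariant linear functional
gives an invariant probability measure with a one-sided integral comparison. -/
theorem key (f : M → M) (hf : Continuous f) (L : C(M, ℝ) → ℝ)
    (hadd : ∀ g h : C(M, ℝ), L (g + h) = L g + L h)
    (hsmul : ∀ (c : ℝ) (g : C(M, ℝ)), L (c • g) = c * L g)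
    (hpos : ∀ g : C(M, ℝ), (∀ x, 0 ≤ g x) → 0 ≤ L g)
    (hone : L 1 = 1)
    (hinv : ∀ g : C(M, ℝ), L (g.comp ⟨f, hf⟩) = L g) :
    ∃ μ : Measure M, IsProbabilityMeasure μ ∧ MeasurePreserving f μ μ ∧
      ∀ g : C(M, ℝ), L g ≤ ∫ x, g x ∂μ := by
  have hLmono : ∀ g h : C(M, ℝ), (∀ x, g x ≤ h x) → L g ≤ L h := by
    intro g h hgh
    have h1 : h = g + (h - g) := by ext x; simp
    have h2 : 0 ≤ L (h - g) := hpos _ fun x => by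
      simp only [ContinuousMap.sub_apply]; linarith [hgh x]
    calc L g ≤ L g + L (h - g) := by linarith
    _ = L (g + (h - g)) := (hadd _ _).symm
    _ = L h := by rw [← h1]
  have hL0 : L 0 = 0 := by
    have := hsmul 0 0
    simpa using this
  have hLsum : ∀ (s : Finset ℕ) (h : ℕ → C(M, ℝ)),
      L (∑ i ∈ s, h i) = ∑ i ∈ s, L (h i) := by
    intro s h
    induction s using Finset.cons_induction with
    | empty => simpa using hL0
    | cons a s ha ih => rw [Finset.sum_cons, hadd, ih, Finset.sum_cons]
  set Λ := mkLam L hadd hsmul hpos with hΛ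
  have hΛcoe : ∀ F : CompactlySupportedContinuousMap M ℝ≥0, ((Λ F : ℝ≥0) : ℝ) = L (toRealCM F) := fun F => rfl
  have hΛ1 : Λ (CompactlySupportedContinuousMap.continuousMapEquiv 1) = 1 := by
    refine NNReal.coe_injective ?_
    rw [hΛcoe]
    have h1 : toRealCM (CompactlySupportedContinuousMap.continuousMapEquiv (1 : C(M, ℝ≥0))) = 1 := by ext x; simp [toRealCM]
    rw [h1, hone, NNReal.coe_one]
  set μC := rieszContent Λ with hμC
  have hreg := rieszContent_regular Λ
  set μ := μC.measure with hμdef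
  have hKc : ∀ K : Compacts M, μ (K : Set M) = (rieszContentAux Λ K : ℝ≥0∞) :=
    fun K => μC.measure_eq_content_of_regular hreg K
  -- total mass 1
  have htop : rieszContentAux Λ ⊤ = 1 := by
    refine le_antisymm ?_ ?_
    · have h1 : rieszContentAux Λ ⊤ ≤ Λ (CompactlySupportedContinuousMap.continuousMapEquiv 1) :=
        rieszContentAux_le Λ (f := CompactlySupportedContinuousMap.continuousMapEquiv 1) fun x _ => le_refl _
      rw [hΛ1] at h1; exact h1
    · refine le_csInf (rieszContentAux_image_nonempty Λ ⊤) ?_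
      rintro b ⟨F, hF, rfl⟩
      calc (1 : ℝ≥0) = Λ (CompactlySupportedContinuousMap.continuousMapEquiv 1) := hΛ1.symm
      _ ≤ Λ F := lam_mono Λ _ _ fun x => by simpa using hF x (by trivial)
  have huniv : μ Set.univ = 1 := by
    have h1 : μ Set.univ = μ ((⊤ : Compacts M) : Set M) := rfl
    rw [h1, hKc ⊤, htop, ENNReal.coe_one]
  haveI hprob : IsProbabilityMeasure μ := ⟨huniv⟩
  -- invariance
  have hfm : Measurable f := hf.measurable
  have hcmp : ∀ K : Compacts M, μ (f ⁻¹' (K : Set M)) ≤ μ (K : Set M) := by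
    intro K
    set K' : Compacts M := ⟨f ⁻¹' (K : Set M), (K.2.isClosed.preimage hf).isCompact⟩ with hK'
    have h1 : μ (f ⁻¹' (K : Set M)) = (rieszContentAux Λ K' : ℝ≥0∞) := hKc K'
    have h2 : rieszContentAux Λ K' ≤ rieszContentAux Λ K := by
      refine le_csInf (rieszContentAux_image_nonempty Λ K) ?_
      rintro b ⟨F, hF, rfl⟩
      have h3 : rieszContentAux Λ K' ≤ Λ (CompactlySupportedContinuousMap.continuousMapEquiv ((F : C(M, ℝ≥0)).comp ⟨f, hf⟩)) := by
        refine (rieszContentAux_le Λ) fun x hx => ?_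
        exact hF (f x) hx
      have h4 : Λ (CompactlySupportedContinuousMap.continuousMapEquiv ((F : C(M, ℝ≥0)).comp ⟨f, hf⟩)) = Λ F := by
        refine NNReal.coe_injective ?_
        rw [hΛcoe, hΛcoe]
        have h5 : toRealCM (CompactlySupportedContinuousMap.continuousMapEquiv ((F : C(M, ℝ≥0)).comp ⟨f, hf⟩)) = (toRealCM F).comp ⟨f, hf⟩ := by
          ext x; rfl
        rw [h5, hinv]
      exact h3.trans_eq h4
    rw [h1, hKc K]
    exact ENNReal.coe_le_coe.2 h2
  have hmap : Measure.map f μ = μ := by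
    haveI : IsProbabilityMeasure (Measure.map f μ) :=
      Measure.isProbabilityMeasure_map hfm.aemeasurable
    have hle : ∀ s : Set M, MeasurableSet s → Measure.map f μ s ≤ μ s := by
      intro s hs
      rw [hs.measure_eq_iSup_isCompact]
      refine iSup_le fun K => iSup_le fun hKs => iSup_le fun hK => ?_
      have h1 : MeasurableSet K := hK.isClosed.measurableSet
      rw [Measure.map_apply hfm h1]
      exact le_trans (hcmp ⟨K, hK⟩) (measure_mono hKs)
    refine Measure.ext fun s hs => le_antisymm (hle s hs) ?_
    have h1 : μ s = 1 - μ sᶜ :=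
      ENNReal.eq_sub_of_add_eq (measure_ne_top μ sᶜ)
        (by rw [measure_add_measure_compl hs, huniv])
    have h2 : Measure.map f μ s = 1 - Measure.map f μ sᶜ :=
      ENNReal.eq_sub_of_add_eq (measure_ne_top _ _)
        (by rw [measure_add_measure_compl hs, measure_univ])
    rw [h1, h2]
    exact tsub_le_tsub_left (hle sᶜ hs.compl) 1
  -- integral comparison for nonnegative functions
  have hgint : ∀ g : C(M, ℝ), Integrable (fun x => g x) μ := fun g => by
    exact (mkOfCompact g).integrable μ
  have hle0 : ∀ g : C(M, ℝ), (∀ x, 0 ≤ g x) → L g ≤ ∫ x, g x ∂μ := by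
    intro g hg
    refine le_of_forall_pos_le_add fun δ hδ => ?_
    set B := ‖mkOfCompact g‖ with hB
    have hgB : ∀ x, g x ≤ B := fun x =>
      le_trans (le_abs_self _) ((mkOfCompact g).norm_coe_le_norm x)
    set N := ⌈B / δ⌉₊ with hN
    have hBN : B ≤ N * δ := by
      rcases le_or_gt B 0 with hB0 | hB0
      · exact hB0.trans (by positivity)
      · exact (div_le_iff₀ hδ).1 (Nat.le_ceil _)
    -- layer functions
    set h : ℕ → C(M, ℝ) := fun i =>
      ⟨fun x => (min (g x) (((i : ℝ) + 2) * δ) - min (g x) (((i : ℝ) + 1) * δ)) / δ,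
        (((g.continuous.min continuous_const).sub
          (g.continuous.min continuous_const)).div_const δ)⟩ with hh
    have hhapp : ∀ i x, h i x =
        (min (g x) (((i : ℝ) + 2) * δ) - min (g x) (((i : ℝ) + 1) * δ)) / δ := fun i x => rfl
    have hh0 : ∀ i x, 0 ≤ h i x := by
      intro i x
      rw [hhapp]
      apply div_nonneg _ hδ.le
      have := min_le_min (le_refl (g x)) (by nlinarith : ((i : ℝ) + 1) * δ ≤ ((i : ℝ) + 2) * δ)
      linarith
    have hh1 : ∀ i x, h i x ≤ 1 := by
      intro i x
      rw [hhapp, div_le_one hδ]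
      have h1 : min (g x) (((i : ℝ) + 2) * δ) ≤ min (g x + δ) (((i : ℝ) + 1) * δ + δ) := by
        refine min_le_min (by linarith) (by nlinarith)
      rw [min_add_add_right] at h1
      linarith
    -- pointwise lower bound for the sum
    have hsum_h : ∀ x, ∑ i ∈ Finset.range N, h i x =
        min (g x) (((N : ℝ) + 1) * δ) / δ - min (g x) δ / δ := by
      intro x
      have htel : ∀ m : ℕ, ∑ i ∈ Finset.range m, h i x =
          min (g x) (((m : ℝ) + 1) * δ) / δ - min (g x) δ / δ := by
        intro m
        induction m with
        | zero => norm_num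
        | succ m ih =>
            rw [Finset.sum_range_succ, ih, hhapp]
            push_cast
            ring_nf
      exact htel N
    have hpt : ∀ x, g x ≤ δ * (∑ i ∈ Finset.range N, h i x) + δ := by
      intro x
      rw [hsum_h x]
      have h1 : min (g x) (((N : ℝ) + 1) * δ) = g x :=
        min_eq_left ((hgB x).trans (by nlinarith))
      rw [h1]
      have h2 : min (g x) δ ≤ δ := min_le_right _ _
      have h3 : δ * (g x / δ - min (g x) δ / δ) = g x - min (g x) δ := by
        field_simp
      rw [h3]
      linarith
    have hLg : L g ≤ δ * (∑ i ∈ Finset.range N, L (h i)) + δ := by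
      have h1 := hLmono g (δ • (∑ i ∈ Finset.range N, h i) + δ • 1) fun x => by
        simpa [ContinuousMap.sum_apply] using hpt x
      rwa [hadd, hsmul, hsmul, hone, mul_one, hLsum] at h1
    -- compact superlevel sets
    set S : ℕ → Set M := fun i => {x | ((i : ℝ) + 1) * δ ≤ g x} with hS
    have hScl : ∀ i, IsClosed (S i) := fun i => isClosed_le continuous_const g.continuous
    have hSm : ∀ i, MeasurableSet (S i) := fun i => (hScl i).measurableSet
    have hhK : ∀ i : ℕ, L (h i) ≤ (μ (S i)).toReal := by
      intro i
      set K : Compacts M := ⟨S i, (hScl i).isCompact⟩ with hKdef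
      have h1 : L (h i) ≤ ((rieszContentAux Λ K : ℝ≥0) : ℝ) := by
        refine le_of_forall_pos_le_add fun ε hε => ?_
        obtain ⟨F, hF1, hFΛ⟩ := exists_lt_rieszContentAux_add_pos Λ K
          (Real.toNNReal_pos.2 hε)
        have h2 : L (h i) ≤ L (toRealCM F) := by
          refine hLmono _ _ fun x => ?_
          by_cases hx : ((i : ℝ) + 1) * δ ≤ g x
          · exact (hh1 i x).trans (by exact_mod_cast hF1 x hx)
          · have h3 : h i x = 0 := by
              rw [hhapp]
              push_neg at hx
              rw [min_eq_left (by nlinarith : g x ≤ ((i : ℝ) + 2) * δ),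
                min_eq_left hx.le, sub_self, zero_div]
            rw [h3]
            exact (F x).2
        have h4 : L (toRealCM F) < ((rieszContentAux Λ K + ε.toNNReal : ℝ≥0) : ℝ) := by
          rw [← hΛcoe]
          exact_mod_cast hFΛ
        rw [NNReal.coe_add, Real.coe_toNNReal _ hε.le] at h4
        linarith
      have h5 : ((rieszContentAux Λ K : ℝ≥0) : ℝ) = (μ (S i)).toReal := by
        rw [show μ (S i) = μ (K : Set M) from rfl, hKc K, ENNReal.coe_toReal]
      exact h1.trans_eq h5
    -- the measure-side sum is at most the integral
    have hind : ∀ i, Integrable (fun x => (S i).indicator (fun _ => δ) x) μ := fun i =>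
      (integrable_const δ).indicator (hSm i)
    have hsum_meas : ∑ i ∈ Finset.range N, (μ (S i)).toReal * δ ≤ ∫ x, g x ∂μ := by
      have h1 : ∀ i, (μ (S i)).toReal * δ = ∫ x, (S i).indicator (fun _ => δ) x ∂μ := by
        intro i
        rw [integral_indicator_const δ (hSm i), smul_eq_mul, measureReal_def]
      calc ∑ i ∈ Finset.range N, (μ (S i)).toReal * δ
          = ∑ i ∈ Finset.range N, ∫ x, (S i).indicator (fun _ => δ) x ∂μ :=
            Finset.sum_congr rfl fun i _ => h1 i
      _ = ∫ x, ∑ i ∈ Finset.range N, (S i).indicator (fun _ => δ) x ∂μ :=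
            (integral_finset_sum _ fun i _ => hind i).symm
      _ ≤ ∫ x, g x ∂μ := by
            refine integral_mono (integrable_finset_sum _ fun i _ => hind i) (hgint g) ?_
            intro x
            have h2 : ∀ i ∈ Finset.range N, (S i).indicator (fun _ => δ) x ≤
                min (g x) (((i : ℝ) + 1) * δ) - min (g x) ((i : ℝ) * δ) := by
              intro i _
              by_cases hx : x ∈ S i
              · rw [Set.indicator_of_mem hx]
                have h3 : ((i : ℝ) + 1) * δ ≤ g x := hx
                rw [min_eq_right h3]
                have h4 : min (g x) ((i : ℝ) * δ) ≤ (i : ℝ) * δ := min_le_right _ _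
                linarith
              · rw [Set.indicator_of_notMem hx]
                have := min_le_min (le_refl (g x)) (by nlinarith : (i : ℝ) * δ ≤ ((i : ℝ) + 1) * δ)
                linarith
            calc ∑ i ∈ Finset.range N, (S i).indicator (fun _ => δ) x
                ≤ ∑ i ∈ Finset.range N,
                    (min (g x) (((i : ℝ) + 1) * δ) - min (g x) ((i : ℝ) * δ)) :=
                  Finset.sum_le_sum h2
            _ = min (g x) ((N : ℝ) * δ) - min (g x) ((0 : ℝ) * δ) := by
                  have htel2 : ∀ m : ℕ, ∑ i ∈ Finset.range m,
                      (min (g x) (((i : ℝ) + 1) * δ) - min (g x) ((i : ℝ) * δ)) =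
                      min (g x) ((m : ℝ) * δ) - min (g x) ((0 : ℝ) * δ) := by
                    intro m
                    induction m with
                    | zero => norm_num
                    | succ m ih =>
                        rw [Finset.sum_range_succ, ih]
                        push_cast
                        ring_nf
                  exact htel2 N
            _ ≤ g x := by
                  rw [zero_mul, min_eq_right (hg x)]
                  have := min_le_left (g x) ((N : ℝ) * δ)
                  linarith
    -- put everything together
    have hfinal : δ * (∑ i ∈ Finset.range N, L (h i)) ≤ ∫ x, g x ∂μ := by
      have h1 : ∑ i ∈ Finset.range N, L (h i) ≤ ∑ i ∈ Finset.range N, (μ (S i)).toReal :=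
        Finset.sum_le_sum fun i _ => hhK i
      have h2 : δ * (∑ i ∈ Finset.range N, L (h i)) ≤
          δ * ∑ i ∈ Finset.range N, (μ (S i)).toReal :=
        mul_le_mul_of_nonneg_left h1 hδ.le
      have h3 : δ * ∑ i ∈ Finset.range N, (μ (S i)).toReal =
          ∑ i ∈ Finset.range N, (μ (S i)).toReal * δ := by
        rw [Finset.mul_sum]
        exact Finset.sum_congr rfl fun i _ => mul_comm _ _
      rw [h3] at h2
      exact h2.trans hsum_meas
    linarith [hLg]
  -- general integral comparison
  refine ⟨μ, hprob, ⟨hfm, hmap⟩, ?_⟩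
  intro g
  set B := ‖mkOfCompact g‖ with hB
  have hgB : ∀ x, 0 ≤ g x + B := by
    intro x
    have h1 : |g x| ≤ B := (mkOfCompact g).norm_coe_le_norm x
    have h2 := neg_abs_le (g x)
    linarith
  have h1 := hle0 (g + B • 1) fun x => by simpa using hgB x
  have h2 : L (g + B • 1) = L g + B := by
    rw [hadd, hsmul, hone, mul_one]
  have h3 : ∫ x, (g + B • 1) x ∂μ = (∫ x, g x ∂μ) + B := by
    have h4 : ∀ x, (g + B • 1) x = g x + B := fun x => by simp
    rw [show (fun x => (g + B • 1) x) = fun x => g x + B from funext h4]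
    rw [integral_add (hgint g) (integrable_const B), integral_const]
    simp [measure_univ]
  rw [h2, h3] at h1
  linarith

end KBAux

open KBAux Filter Topology in
/-- If `∫ φ dμ < λ` for every `f`-invariant Borel probability measure `μ` on a
compact metric space `M`, then there is `N ≥ 1` such that all Birkhoff
averages of length `n ≥ N` are uniformly below `λ`. -/
theorem stmt5 {M : Type*} [MetricSpace M] [CompactSpace M]
    [MeasurableSpace M] [BorelSpace M]
    (f : M → M) (hf : Continuous f) (φ : M → ℝ) (hφ : Continuous φ) (lam : ℝ)
    (hint : ∀ μ : Measure M, IsProbabilityMeasure μ →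
      MeasurePreserving f μ μ → (∫ x, φ x ∂μ) < lam) :
    ∃ N : ℕ, 1 ≤ N ∧ ∀ n ≥ N, ∀ x : M,
      (1 / (n : ℝ)) * ∑ i ∈ Finset.range n, φ (f^[i] x) < lam := by
  by_contra hcon
  push_neg at hcon
  choose n hn x hx using fun k => hcon (k + 1) (Nat.succ_le_succ (Nat.zero_le k))
  have hnpos : ∀ k, 0 < n k := fun k => lt_of_lt_of_le (Nat.succ_pos k) (hn k)
  have hncast : ∀ k, (0 : ℝ) < (n k : ℝ) := fun k => by exact_mod_cast hnpos k
  obtain ⟨U, hU⟩ := Filter.exists_ultrafilter_le (Filter.atTop : Filter ℕ)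
  set A : C(M, ℝ) → ℕ → ℝ := fun g k =>
    (1 / (n k : ℝ)) * ∑ i ∈ Finset.range (n k), g (f^[i] (x k)) with hA
  set L : C(M, ℝ) → ℝ := fun g => lim (Filter.map (A g) ↑U) with hL
  have htend : ∀ g : C(M, ℝ), Tendsto (A g) ↑U (𝓝 (L g)) := by
    intro g
    set B := ‖BoundedContinuousFunction.mkOfCompact g‖ with hB
    have hbound : ∀ k, A g k ∈ Set.Icc (-B) B := by
      intro k
      have h1 : |∑ i ∈ Finset.range (n k), g (f^[i] (x k))| ≤ (n k : ℝ) * B := by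
        calc |∑ i ∈ Finset.range (n k), g (f^[i] (x k))|
            ≤ ∑ i ∈ Finset.range (n k), |g (f^[i] (x k))| :=
              Finset.abs_sum_le_sum_abs _ _
        _ ≤ ∑ _i ∈ Finset.range (n k), B :=
              Finset.sum_le_sum fun i _ =>
                (BoundedContinuousFunction.mkOfCompact g).norm_coe_le_norm _
        _ = (n k : ℝ) * B := by
              rw [Finset.sum_const, Finset.card_range, nsmul_eq_mul]
      have h2 : |A g k| ≤ B := by
        rw [hA]
        rw [abs_mul, abs_of_nonneg (by positivity : (0:ℝ) ≤ 1 / (n k : ℝ))]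
        calc 1 / (n k : ℝ) * |∑ i ∈ Finset.range (n k), g (f^[i] (x k))|
            ≤ 1 / (n k : ℝ) * ((n k : ℝ) * B) := by
              apply mul_le_mul_of_nonneg_left h1 (by positivity)
        _ = B := by
              rw [one_div, inv_mul_eq_div, mul_comm, mul_div_assoc,
                div_self (hncast k).ne', mul_one]
      exact abs_le.1 h2
    have hmem : Set.Icc (-B) B ∈ Filter.map (A g) ↑U :=
      Filter.mem_map.2 (Filter.univ_mem' hbound)
    obtain ⟨ℓ, _, hℓ⟩ := (isCompact_Icc : IsCompact (Set.Icc (-B) B)).ultrafilter_le_nhds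
      (U.map (A g)) (le_principal_iff.2 (by exact hmem))
    exact le_nhds_lim ⟨ℓ, hℓ⟩
  haveI : (↑U : Filter ℕ).NeBot := U.neBot
  have hadd : ∀ g h : C(M, ℝ), L (g + h) = L g + L h := by
    intro g h
    refine tendsto_nhds_unique (htend (g + h)) ?_
    have h1 : (fun k => A g k + A h k) = A (g + h) := by
      funext k
      simp only [hA, ContinuousMap.add_apply, Finset.sum_add_distrib]
      ring
    exact h1 ▸ ((htend g).add (htend h))
  have hsmul : ∀ (c : ℝ) (g : C(M, ℝ)), L (c • g) = c * L g := by
    intro c g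
    refine tendsto_nhds_unique (htend (c • g)) ?_
    have h1 : (fun k => c * A g k) = A (c • g) := by
      funext k
      simp only [hA, ContinuousMap.smul_apply, smul_eq_mul, Finset.mul_sum]
      exact Finset.sum_congr rfl fun i _ => by ring
    exact h1 ▸ ((htend g).const_mul c)
  have hposL : ∀ g : C(M, ℝ), (∀ y, 0 ≤ g y) → 0 ≤ L g := by
    intro g hg
    refine ge_of_tendsto' (htend g) fun k => ?_
    exact mul_nonneg (by positivity) (Finset.sum_nonneg fun i _ => hg _)
  have hone : L 1 = 1 := by
    refine tendsto_nhds_unique (htend 1) ?_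
    have h1 : A 1 = fun _ => (1 : ℝ) := by
      funext k
      simp only [hA, ContinuousMap.one_apply]
      rw [Finset.sum_const, Finset.card_range, nsmul_eq_mul, mul_one,
        one_div, inv_mul_cancel₀ (hncast k).ne']
    rw [h1]
    exact tendsto_const_nhds
  have hinvL : ∀ g : C(M, ℝ), L (g.comp ⟨f, hf⟩) = L g := by
    intro g
    have heq : ∀ k, A (g.comp ⟨f, hf⟩) k - A g k =
        (1 / (n k : ℝ)) * (g (f^[n k] (x k)) - g (x k)) := by
      intro k
      have h1 : ∑ i ∈ Finset.range (n k), g (f (f^[i] (x k))) -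
          ∑ i ∈ Finset.range (n k), g (f^[i] (x k)) =
          g (f^[n k] (x k)) - g (x k) := by
        calc ∑ i ∈ Finset.range (n k), g (f (f^[i] (x k))) -
            ∑ i ∈ Finset.range (n k), g (f^[i] (x k))
            = ∑ i ∈ Finset.range (n k), (g (f^[i+1] (x k)) - g (f^[i] (x k))) := by
              rw [Finset.sum_sub_distrib]
              congr 1
              exact Finset.sum_congr rfl fun i _ => by rw [Function.iterate_succ_apply']
        _ = g (f^[n k] (x k)) - g (f^[0] (x k)) :=
              Finset.sum_range_sub (fun i => g (f^[i] (x k))) (n k)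
        _ = g (f^[n k] (x k)) - g (x k) := by rw [Function.iterate_zero_apply]
      simp only [hA, ContinuousMap.comp_apply, ContinuousMap.coe_mk]
      rw [← mul_sub, h1]
    have hb : Tendsto (fun k : ℕ =>
        (1 / (k + 1 : ℝ)) * (2 * ‖BoundedContinuousFunction.mkOfCompact g‖)) atTop (𝓝 0) := by
      have h5 : Tendsto (fun k : ℕ => (1 / (k + 1 : ℝ))) atTop (𝓝 0) :=
        tendsto_one_div_add_atTop_nhds_zero_nat
      simpa using h5.mul_const (2 * ‖BoundedContinuousFunction.mkOfCompact g‖)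
    have hdiff : Tendsto (fun k => A (g.comp ⟨f, hf⟩) k - A g k) atTop (𝓝 0) := by
      refine squeeze_zero_norm (fun k => ?_) hb
      rw [heq k, norm_mul]
      have h1 : ‖g (f^[n k] (x k)) - g (x k)‖ ≤
          2 * ‖BoundedContinuousFunction.mkOfCompact g‖ := by
        have h2 : ‖g (f^[n k] (x k))‖ ≤ ‖BoundedContinuousFunction.mkOfCompact g‖ :=
          (BoundedContinuousFunction.mkOfCompact g).norm_coe_le_norm (f^[n k] (x k))
        have h3 : ‖g (x k)‖ ≤ ‖BoundedContinuousFunction.mkOfCompact g‖ :=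
          (BoundedContinuousFunction.mkOfCompact g).norm_coe_le_norm (x k)
        calc ‖g (f^[n k] (x k)) - g (x k)‖ ≤ ‖g (f^[n k] (x k))‖ + ‖g (x k)‖ := norm_sub_le _ _
        _ ≤ 2 * ‖BoundedContinuousFunction.mkOfCompact g‖ := by linarith
      have h4 : ‖(1 / (n k : ℝ))‖ ≤ 1 / (k + 1 : ℝ) := by
        rw [Real.norm_of_nonneg (by positivity)]
        apply one_div_le_one_div_of_le (by positivity)
        exact_mod_cast hn k
      exact mul_le_mul h4 h1 (norm_nonneg _) (by positivity)
    have h6 : Tendsto (fun k => A (g.comp ⟨f, hf⟩) k - A g k) ↑U (𝓝 0) :=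
      hdiff.mono_left hU
    have h7 : Tendsto (fun k => A (g.comp ⟨f, hf⟩) k - A g k) ↑U
        (𝓝 (L (g.comp ⟨f, hf⟩) - L g)) := (htend _).sub (htend g)
    have := tendsto_nhds_unique h7 h6
    linarith
  obtain ⟨μ, hμprob, hμinv, hμint⟩ := key f hf L hadd hsmul hposL hone hinvL
  have hlam : lam ≤ L ⟨φ, hφ⟩ := by
    refine ge_of_tendsto' (htend ⟨φ, hφ⟩) fun k => ?_
    simpa [hA] using hx k
  have h8 : L ⟨φ, hφ⟩ ≤ ∫ y, φ y ∂μ := by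
    simpa using hμint ⟨φ, hφ⟩
  have h9 := hint μ hμprob hμinv
  linarith
end

section
/- Let f : M → M be a continuous map of a compact metric space with the specification property, and let φ : M → ℝ be continuous. If p and q are periodic points with distinct Birkhoff averages α = lim (1/n)∑φ(fⁱ(p)) < β = lim (1/n)∑φ(fⁱ(q)), then there exists a point z ∈ M and subsequences n_k → ∞, m_k → ∞ such that (1/n_k)∑_{i=0}^{n_k−1} φ(fⁱ(z)) → α and (1/m_k)∑_{i=0}^{m_k−1} φ(fⁱ(z)) → β; in particular, the Birkhoff average of φ at z does not exist. -/
open Filter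

/-- The specification property: for every `ε > 0` there is a relaxation time
`N` such that any finite collection of orbit segments `x_i, …, f^[k i] x_i`
(`i < r`) can be `ε`-shadowed by a single orbit, with gaps bounded by `N`. -/
def SpecificationProperty {M : Type*} [MetricSpace M] (f : M → M) : Prop :=
  ∀ ε : ℝ, 0 < ε → ∃ N : ℕ, ∀ (r : ℕ) (x : ℕ → M) (k : ℕ → ℕ),
    ∃ (a : ℕ → ℕ) (z : M),
      (∀ i, i + 1 < r → a i ≤ a (i + 1) ∧ a (i + 1) ≤ a i + k i + N) ∧
      (∀ i < r, ∀ j ≤ k i, dist (f^[a i + j] z) (f^[j] (x i)) < ε)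

private lemma depChoice {σ : Type*} (init : σ) (R : ℕ → σ → σ → Prop)
    (h : ∀ n s, ∃ t, R n s t) :
    ∃ g : ℕ → σ, g 0 = init ∧ ∀ n, R n (g n) (g (n + 1)) := by
  choose next hnext using h
  exact ⟨fun n => Nat.rec init next n, rfl, fun n => hnext n _⟩

private lemma sum_range_add' (h : ℕ → ℝ) (m n : ℕ) :
    ∑ i ∈ Finset.range (m + n), h i
      = ∑ i ∈ Finset.range m, h i + ∑ j ∈ Finset.range n, h (m + j) := by
  induction n with
  | zero => simp
  | succ n ih =>
      have h1 : m + (n + 1) = (m + n) + 1 := by omega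
      rw [h1, Finset.sum_range_succ, ih, Finset.sum_range_succ]
      ring

private lemma sum_shift_periodic {M : Type*} (f : M → M) (φ : M → ℝ) (x : M) (m : ℕ)
    (hx : f^[m] x = x) (n : ℕ) :
    ∑ i ∈ Finset.range (m + n), φ (f^[i] x)
      = ∑ i ∈ Finset.range m, φ (f^[i] x) + ∑ i ∈ Finset.range n, φ (f^[i] x) := by
  rw [sum_range_add' _ m n]
  congr 1
  refine Finset.sum_congr rfl fun j _ => ?_
  congr 1
  rw [add_comm m j, Function.iterate_add_apply, hx]

private lemma abs_sum_le_mul {M : Type*} (φ : M → ℝ) (C : ℝ) (hC : ∀ y, |φ y| ≤ C)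
    (u : ℕ → M) (j : ℕ) :
    |∑ i ∈ Finset.range j, φ (u i)| ≤ j * C := by
  calc |∑ i ∈ Finset.range j, φ (u i)| ≤ ∑ i ∈ Finset.range j, |φ (u i)| :=
        Finset.abs_sum_le_sum_abs _ _
    _ ≤ ∑ _i ∈ Finset.range j, C := Finset.sum_le_sum fun i _ => hC _
    _ = j * C := by simp [mul_comm]

private lemma periodic_sum_bound {M : Type*} (f : M → M) (φ : M → ℝ) (x : M) (m : ℕ)
    (hm : 1 ≤ m) (hx : f^[m] x = x) (C : ℝ) (hC : ∀ y, |φ y| ≤ C) (γ : ℝ)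
    (hγ : γ = (1 / (m : ℝ)) * ∑ i ∈ Finset.range m, φ (f^[i] x)) :
    ∀ n : ℕ, |∑ i ∈ Finset.range n, φ (f^[i] x) - n * γ| ≤ 2 * m * C := by
  have hC0 : 0 ≤ C := le_trans (abs_nonneg _) (hC x)
  have hm0 : (0:ℝ) < m := by exact_mod_cast hm
  have habs : ∀ j : ℕ, |∑ i ∈ Finset.range j, φ (f^[i] x)| ≤ j * C :=
    fun j => abs_sum_le_mul φ C hC _ j
  have hSm : ∑ i ∈ Finset.range m, φ (f^[i] x) = m * γ := by
    rw [hγ]; field_simp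
  have hγabs : |γ| ≤ C := by
    have h1 := habs m
    rw [hSm, abs_mul, abs_of_pos hm0] at h1
    exact (mul_le_mul_iff_right₀ hm0).1 h1
  intro n
  induction n using Nat.strong_induction_on with
  | _ n ih =>
    by_cases h : n < m
    · have h1 : |∑ i ∈ Finset.range n, φ (f^[i] x)| ≤ n * C := habs n
      have h2 : |(n:ℝ) * γ| ≤ n * C := by
        rw [abs_mul, abs_of_nonneg (by positivity : (0:ℝ) ≤ ((n:ℕ):ℝ))]
        exact mul_le_mul_of_nonneg_left hγabs (by positivity)
      have hn : (n:ℝ) ≤ m := by exact_mod_cast h.le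
      calc |∑ i ∈ Finset.range n, φ (f^[i] x) - n * γ|
          ≤ |∑ i ∈ Finset.range n, φ (f^[i] x)| + |(n:ℝ) * γ| := abs_sub _ _
        _ ≤ n * C + n * C := add_le_add h1 h2
        _ ≤ m * C + m * C := by nlinarith
        _ = 2 * m * C := by ring
    · push_neg at h
      have hn : n = m + (n - m) := by omega
      rw [hn, sum_shift_periodic f φ x m hx, hSm]
      have hcast : ((m + (n - m) : ℕ) : ℝ) = (m : ℝ) + ((n - m : ℕ) : ℝ) := by push_cast; ring
      rw [hcast]
      have hih := ih (n - m) (by omega)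
      calc |↑m * γ + ∑ i ∈ Finset.range (n - m), φ (f^[i] x) - (↑m + ↑(n - m)) * γ|
          = |∑ i ∈ Finset.range (n - m), φ (f^[i] x) - ↑(n - m) * γ| := by ring_nf
        _ ≤ 2 * m * C := hih

private def wseq {M : Type*} (p q : M) (s : ℕ) : M := if s % 2 = 0 then p else q

private def γseq (α β : ℝ) (s : ℕ) : ℝ := if s % 2 = 0 then α else β

set_option maxHeartbeats 1000000 in
/-- Two periodic points with distinct Birkhoff averages `α < β` of a continuous
function `φ`, for a continuous map with the specification property, produce a
point `z` whose Birkhoff averages have both `α` and `β` as subsequential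
limits; in particular the Birkhoff average at `z` does not exist. -/
theorem stmt8 {M : Type*} [MetricSpace M] [CompactSpace M]
    (f : M → M) (hf : Continuous f) (hspec : SpecificationProperty f)
    (φ : M → ℝ) (hφ : Continuous φ)
    (p q : M) (mp mq : ℕ) (hmp : 1 ≤ mp) (hmq : 1 ≤ mq)
    (hp : f^[mp] p = p) (hq : f^[mq] q = q)
    (α β : ℝ)
    (hα : α = (1 / (mp : ℝ)) * ∑ i ∈ Finset.range mp, φ (f^[i] p))
    (hβ : β = (1 / (mq : ℝ)) * ∑ i ∈ Finset.range mq, φ (f^[i] q))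
    (hαβ : α < β) :
    ∃ (z : M) (n m : ℕ → ℕ), StrictMono n ∧ StrictMono m ∧
      Tendsto (fun k => (1 / (n k : ℝ)) *
        ∑ i ∈ Finset.range (n k), φ (f^[i] z)) atTop (nhds α) ∧
      Tendsto (fun k => (1 / (m k : ℝ)) *
        ∑ i ∈ Finset.range (m k), φ (f^[i] z)) atTop (nhds β) ∧
      ¬ ∃ c : ℝ, Tendsto (fun n : ℕ => (1 / (n : ℝ)) *
        ∑ i ∈ Finset.range n, φ (f^[i] z)) atTop (nhds c) := by
  classical
  obtain ⟨C0, hC0⟩ := (isCompact_univ : IsCompact (Set.univ : Set M)).exists_bound_of_continuousOn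
    hφ.continuousOn
  set C := max C0 0 with hCdef
  have hC : ∀ y : M, |φ y| ≤ C := fun y =>
    le_trans (by simpa using hC0 y (Set.mem_univ y)) (le_max_left _ _)
  have hCnn : (0:ℝ) ≤ C := le_max_right _ _
  have hUC : ∀ δ : ℝ, 0 < δ → ∃ η > 0, ∀ x y : M, dist x y < η → |φ x - φ y| < δ := by
    intro δ hδ
    rcases Metric.uniformContinuous_iff.1 (CompactSpace.uniformContinuous_of_continuous hφ)
      δ hδ with ⟨η, hη, h⟩
    exact ⟨η, hη, fun x y hxy => by simpa [Real.dist_eq] using h hxy⟩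
  -- the inductive construction step
  have hstep : ∀ (s : ℕ) (u : {e : ℝ // 0 < e} × M × ℕ),
      ∃ v : {e : ℝ // 0 < e} × M × ℕ,
        v.1.1 ≤ u.1.1 / 2 ∧
        (∀ x y : M, dist x y < 3 * v.1.1 → |φ x - φ y| < 1 / (s + 2)) ∧
        (∀ t ≤ u.2.2, dist (f^[t] v.2.1) (f^[t] u.2.1) < v.1.1) ∧
        u.2.2 < v.2.2 ∧
        ∃ a kk : ℕ, v.2.2 = a + kk + 1 ∧
          ((a : ℝ) + mp + mq) * (2 * C + 1) * (s + 2) ≤ kk ∧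
          ∀ j ≤ kk, dist (f^[a + j] v.2.1) (f^[j] (wseq p q (s + 1))) < v.1.1 := by
    rintro s ⟨⟨e, he⟩, z, L⟩
    obtain ⟨η, hη, hηs⟩ := hUC (1 / (s + 2)) (by positivity)
    set e' : ℝ := min (e / 2) (η / 3) with he'def
    have he' : 0 < e' := lt_min (by linarith) (by linarith)
    obtain ⟨N, hN⟩ := hspec e' he'
    set kk : ℕ := L + 1 + ⌈((L : ℝ) + N + mp + mq) * (2 * C + 1) * (s + 2)⌉₊ with hkkdef
    obtain ⟨a, z1, hgap, hsh⟩ := hN 2 (fun i => if i = 0 then z else wseq p q (s + 1))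
      (fun i => if i = 0 then L else kk)
    have h01 := hgap 0 (by norm_num)
    have ha01 : a 0 ≤ a 1 := h01.1
    have ha1 : a 1 ≤ a 0 + L + N := by simpa using h01.2
    have hs0 : ∀ j ≤ L, dist (f^[a 0 + j] z1) (f^[j] z) < e' := by
      intro j hj
      have := hsh 0 (by norm_num) j (by simpa using hj)
      simpa using this
    have hs1 : ∀ j ≤ kk, dist (f^[a 1 + j] z1) (f^[j] (wseq p q (s + 1))) < e' := by
      intro j hj
      have := hsh 1 (by norm_num) j (by simpa using hj)
      simpa using this
    set A : ℕ := a 1 - a 0 with hAdef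
    have hiter : ∀ t : ℕ, f^[t] (f^[a 0] z1) = f^[a 0 + t] z1 := by
      intro t
      rw [add_comm, Function.iterate_add_apply]
    refine ⟨⟨⟨e', he'⟩, f^[a 0] z1, A + kk + 1⟩, min_le_left _ _, ?_, ?_, ?_, A, kk, rfl, ?_, ?_⟩
    · intro x y hxy
      apply hηs
      have h3 : 3 * e' ≤ η := by
        have := min_le_right (e / 2) (η / 3); rw [he'def]; linarith
      linarith
    · intro t ht
      rw [hiter t]
      exact hs0 t ht
    · show L < A + kk + 1
      omega
    · show ((A : ℝ) + mp + mq) * (2 * C + 1) * (s + 2) ≤ (kk : ℝ)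
      have hA : A ≤ L + N := by omega
      have h1 : ((A : ℝ) + mp + mq) ≤ ((L : ℝ) + N + mp + mq) := by
        have : (A : ℝ) ≤ (L : ℝ) + N := by exact_mod_cast hA
        linarith
      have h2 : ((A : ℝ) + mp + mq) * (2 * C + 1) * (s + 2)
          ≤ ((L : ℝ) + N + mp + mq) * (2 * C + 1) * (s + 2) :=
        mul_le_mul_of_nonneg_right (mul_le_mul_of_nonneg_right h1 (by linarith)) (by positivity)
      calc ((A : ℝ) + mp + mq) * (2 * C + 1) * (s + 2)
          ≤ ((L : ℝ) + N + mp + mq) * (2 * C + 1) * (s + 2) := h2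
        _ ≤ ⌈((L : ℝ) + N + mp + mq) * (2 * C + 1) * (s + 2)⌉₊ := Nat.le_ceil _
        _ ≤ (kk : ℝ) := by
            rw [hkkdef]; push_cast; linarith [(Nat.cast_nonneg L : (0:ℝ) ≤ (L:ℝ))]
    · intro j hj
      rw [hiter (A + j)]
      have heq : a 0 + (A + j) = a 1 + j := by omega
      rw [heq]
      exact hs1 j hj
  obtain ⟨g, hg0, hg⟩ := depChoice (⟨⟨1, one_pos⟩, p, 0⟩ : {e : ℝ // 0 < e} × M × ℕ) _ hstep
  set E : ℕ → ℝ := fun s => (g s).1.1 with hEdef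
  set Z : ℕ → M := fun s => (g s).2.1 with hZdef
  set L : ℕ → ℕ := fun s => (g s).2.2 with hLdef
  have he : ∀ s, 0 < E s := fun s => (g s).1.2
  have hhalf : ∀ s, E (s + 1) ≤ E s / 2 := fun s => (hg s).1
  have hUCe : ∀ s, ∀ x y : M, dist x y < 3 * E (s + 1) → |φ x - φ y| < 1 / (s + 2) :=
    fun s => (hg s).2.1
  have hpre : ∀ s, ∀ t ≤ L s, dist (f^[t] (Z (s + 1))) (f^[t] (Z s)) < E (s + 1) :=
    fun s => (hg s).2.2.1
  have hLlt : ∀ s, L s < L (s + 1) := fun s => (hg s).2.2.2.1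
  choose A K hLK hKbig hblock using fun s => (hg s).2.2.2.2
  have hLmono : StrictMono L := strictMono_nat_of_lt_succ hLlt
  have hLK2 : ∀ s, L (s + 1) = A s + K s + 1 := hLK
  have hblock2 : ∀ s j, j ≤ K s →
      dist (f^[A s + j] (Z (s + 1))) (f^[j] (wseq p q (s + 1))) < E (s + 1) := hblock
  have hE0 : E 0 = 1 := by show ((g 0).1 : ℝ) = 1; rw [hg0]
  have hEgeo : ∀ s, E s ≤ (1 / 2 : ℝ) ^ s := by
    intro s; induction s with
    | zero => rw [hE0]; norm_num
    | succ s ih =>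
        have h1 := hhalf s
        calc E (s + 1) ≤ E s / 2 := h1
          _ ≤ (1/2 : ℝ)^s / 2 := by linarith
          _ = (1/2 : ℝ)^(s+1) := by ring
  have hEtend : Tendsto E atTop (nhds 0) :=
    squeeze_zero (fun s => (he s).le) hEgeo
      (tendsto_pow_atTop_nhds_zero_of_lt_one (by norm_num) (by norm_num))
  have hstab : ∀ s v, s ≤ v → ∀ t ≤ L s, dist (f^[t] (Z v)) (f^[t] (Z s)) ≤ E s - E v := by
    intro s v hsv
    induction v, hsv using Nat.le_induction with
    | base => intro t _; simp
    | succ v hsv ih =>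
        intro t ht
        have h1 := (hpre v t (le_trans ht (hLmono.monotone hsv))).le
        have h2 := ih t ht
        have h3 := hhalf v
        calc dist (f^[t] (Z (v+1))) (f^[t] (Z s))
            ≤ dist (f^[t] (Z (v+1))) (f^[t] (Z v)) + dist (f^[t] (Z v)) (f^[t] (Z s)) :=
              dist_triangle _ _ _
          _ ≤ E (v+1) + (E s - E v) := by linarith
          _ ≤ E s - E (v+1) := by linarith
  have hcauchy : CauchySeq Z := by
    apply cauchySeq_of_le_tendsto_0 (fun s => 2 * E s) ?_ ?_
    · intro n1 m1 N1 hn1 hm1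
      show dist (Z n1) (Z m1) ≤ 2 * E N1
      have h1 := hstab N1 n1 hn1 0 (Nat.zero_le _)
      have h2 := hstab N1 m1 hm1 0 (Nat.zero_le _)
      simp only [Function.iterate_zero_apply] at h1 h2
      have h3 := dist_triangle (Z n1) (Z N1) (Z m1)
      rw [dist_comm (Z N1) (Z m1)] at h3
      have h4 := he n1; have h5 := he m1
      have h6 := dist_comm (Z m1) (Z N1)
      linarith [h6 ▸ h2]
    · simpa using hEtend.const_mul (2:ℝ)
  obtain ⟨zl, hzl⟩ := cauchySeq_tendsto_of_complete hcauchy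
  have hshadow : ∀ s, ∀ t, t ≤ L s → dist (f^[t] zl) (f^[t] (Z s)) ≤ E s := by
    intro s t ht
    have hcont : Continuous fun x : M => dist (f^[t] x) (f^[t] (Z s)) :=
      (hf.iterate t).dist continuous_const
    have htend : Tendsto (fun v => dist (f^[t] (Z v)) (f^[t] (Z s))) atTop
        (nhds (dist (f^[t] zl) (f^[t] (Z s)))) := (hcont.tendsto zl).comp hzl
    apply le_of_tendsto htend
    filter_upwards [eventually_ge_atTop s] with v hv
    have h1 := hstab s v hv t ht
    linarith [he v]
  have hbl : ∀ s, ∀ j ≤ K s, |φ (f^[A s + j] zl) - φ (f^[j] (wseq p q (s + 1)))| < 1 / (s + 2) := by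
    intro s j hj
    apply hUCe s
    have h1 : A s + j ≤ L (s + 1) := by have := hLK2 s; omega
    have h2 := hshadow (s + 1) (A s + j) h1
    have h3 := hblock2 s j hj
    have h4 := he (s + 1)
    calc dist (f^[A s + j] zl) (f^[j] (wseq p q (s + 1)))
        ≤ dist (f^[A s + j] zl) (f^[A s + j] (Z (s+1)))
            + dist (f^[A s + j] (Z (s+1))) (f^[j] (wseq p q (s+1))) := dist_triangle _ _ _
      _ < 3 * E (s+1) := by linarith
  -- |α|,|β| ≤ C
  have hmp0 : (0:ℝ) < mp := by exact_mod_cast hmp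
  have hmq0 : (0:ℝ) < mq := by exact_mod_cast hmq
  have hαabs : |α| ≤ C := by
    rw [hα, abs_mul, abs_of_pos (by positivity : (0:ℝ) < 1 / mp)]
    calc 1 / (mp:ℝ) * |∑ i ∈ Finset.range mp, φ (f^[i] p)|
        ≤ 1 / (mp:ℝ) * (mp * C) := by
          exact mul_le_mul_of_nonneg_left (abs_sum_le_mul φ C hC _ mp) (by positivity)
      _ = C := by field_simp
  have hβabs : |β| ≤ C := by
    rw [hβ, abs_mul, abs_of_pos (by positivity : (0:ℝ) < 1 / mq)]
    calc 1 / (mq:ℝ) * |∑ i ∈ Finset.range mq, φ (f^[i] q)|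
        ≤ 1 / (mq:ℝ) * (mq * C) := by
          exact mul_le_mul_of_nonneg_left (abs_sum_le_mul φ C hC _ mq) (by positivity)
      _ = C := by field_simp
  -- key estimate
  have hkey : ∀ s, |(1 / (L (s+1) : ℝ)) * (∑ i ∈ Finset.range (L (s+1)), φ (f^[i] zl))
      - γseq α β (s+1)| ≤ 2 / (s + 2) := by
    intro s
    have hTdef : L (s + 1) = A s + K s + 1 := hLK2 s
    have hper : ∃ mm : ℕ, 1 ≤ mm ∧ mm ≤ mp + mq ∧ f^[mm] (wseq p q (s+1)) = wseq p q (s+1) ∧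
        γseq α β (s+1) = (1 / (mm : ℝ)) * ∑ i ∈ Finset.range mm, φ (f^[i] (wseq p q (s+1))) := by
      by_cases hpar : (s+1) % 2 = 0
      · exact ⟨mp, hmp, by omega, by simp [wseq, hpar, hp], by simp [wseq, γseq, hpar, hα]⟩
      · exact ⟨mq, hmq, by omega, by simp [wseq, hpar, hq], by simp [wseq, γseq, hpar, hβ]⟩
    obtain ⟨mm, hmm1, hmmle, hmmx, hγx⟩ := hper
    have hCsum := periodic_sum_bound f φ (wseq p q (s+1)) mm hmm1 hmmx C hC _ hγx
    set γ := γseq α β (s+1) with hγdef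
    have hγabs : |γ| ≤ C := by
      rw [hγdef, γseq]
      split <;> [exact hαabs; exact hβabs]
    set S1 := ∑ i ∈ Finset.range (A s), φ (f^[i] zl) with hS1def
    set S2 := ∑ j ∈ Finset.range (K s + 1), φ (f^[A s + j] zl) with hS2def
    set S2p := ∑ j ∈ Finset.range (K s + 1), φ (f^[j] (wseq p q (s+1))) with hS2pdef
    have hsplit : ∑ i ∈ Finset.range (L (s+1)), φ (f^[i] zl) = S1 + S2 := by
      rw [hTdef, show A s + K s + 1 = A s + (K s + 1) from by omega, sum_range_add']
    have hS1abs : |S1| ≤ (A s : ℝ) * C := abs_sum_le_mul φ C hC _ (A s)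
    have hs2pos : (0:ℝ) < (s:ℝ) + 2 := by positivity
    have hS2diff : |S2 - S2p| ≤ ((K s : ℝ) + 1) * (1 / (s + 2)) := by
      rw [hS2def, hS2pdef, ← Finset.sum_sub_distrib]
      calc |∑ j ∈ Finset.range (K s + 1),
              (φ (f^[A s + j] zl) - φ (f^[j] (wseq p q (s+1))))|
          ≤ ∑ j ∈ Finset.range (K s + 1),
              |φ (f^[A s + j] zl) - φ (f^[j] (wseq p q (s+1)))| :=
            Finset.abs_sum_le_sum_abs _ _
        _ ≤ ∑ _j ∈ Finset.range (K s + 1), 1 / ((s:ℝ) + 2) := by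
            refine Finset.sum_le_sum fun j hj => ?_
            exact (hbl s j (by simpa using Nat.lt_succ_iff.1 (Finset.mem_range.1 hj))).le
        _ = ((K s : ℝ) + 1) * (1 / (s + 2)) := by
            rw [Finset.sum_const, Finset.card_range]
            push_cast
            ring
    have hS2p : |S2p - ((K s : ℝ) + 1) * γ| ≤ 2 * (mp + mq) * C := by
      have h1 := hCsum (K s + 1)
      have h2 : ((K s + 1 : ℕ) : ℝ) = (K s : ℝ) + 1 := by push_cast; ring
      rw [h2] at h1
      calc |S2p - ((K s : ℝ) + 1) * γ| ≤ 2 * (mm:ℝ) * C := h1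
        _ ≤ 2 * ((mp:ℝ) + mq) * C := by
            have : (mm : ℝ) ≤ (mp:ℝ) + mq := by exact_mod_cast hmmle
            nlinarith
    have hTc : ((L (s+1) : ℕ) : ℝ) = (A s : ℝ) + ((K s : ℝ) + 1) := by
      rw [hTdef]; push_cast; ring
    have hAγ : |(A s : ℝ) * γ| ≤ (A s : ℝ) * C := by
      rw [abs_mul, abs_of_nonneg (Nat.cast_nonneg (A s))]
      exact mul_le_mul_of_nonneg_left hγabs (Nat.cast_nonneg _)
    have hD : |(∑ i ∈ Finset.range (L (s+1)), φ (f^[i] zl)) - (L (s+1) : ℝ) * γ|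
        ≤ 2 * C * ((A s : ℝ) + mp + mq) + ((K s : ℝ) + 1) * (1 / (s + 2)) := by
      rw [hsplit, hTc]
      calc |S1 + S2 - ((A s : ℝ) + ((K s : ℝ) + 1)) * γ|
          = |S1 + (S2 - S2p) + (S2p - ((K s : ℝ) + 1) * γ) + (-((A s : ℝ) * γ))| := by
            ring_nf
        _ ≤ |S1| + |S2 - S2p| + |S2p - ((K s : ℝ) + 1) * γ| + |(-((A s : ℝ) * γ))| := by
            calc |S1 + (S2 - S2p) + (S2p - ((K s : ℝ) + 1) * γ) + (-((A s : ℝ) * γ))|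
                ≤ |S1 + (S2 - S2p) + (S2p - ((K s : ℝ) + 1) * γ)| + |(-((A s : ℝ) * γ))| :=
                  abs_add_le _ _
              _ ≤ |S1 + (S2 - S2p)| + |S2p - ((K s : ℝ) + 1) * γ| + |(-((A s : ℝ) * γ))| := by
                  linarith [abs_add_le (S1 + (S2 - S2p)) (S2p - ((K s : ℝ) + 1) * γ)]
              _ ≤ |S1| + |S2 - S2p| + |S2p - ((K s : ℝ) + 1) * γ| + |(-((A s : ℝ) * γ))| := by
                  linarith [abs_add_le S1 (S2 - S2p)]
        _ ≤ (A s : ℝ) * C + ((K s : ℝ) + 1) * (1 / (s + 2)) + 2 * ((mp:ℝ) + mq) * C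
              + (A s : ℝ) * C := by
            rw [abs_neg]
            linarith
        _ = 2 * C * ((A s : ℝ) + mp + mq) + ((K s : ℝ) + 1) * (1 / (s + 2)) := by ring
    have hT0 : (0:ℝ) < (L (s+1) : ℝ) := by
      have h0 : 0 < L (s+1) := by omega
      exact_mod_cast h0
    have hAnn : (0:ℝ) ≤ (A s : ℝ) := by positivity
    have hKT : (K s : ℝ) + 1 ≤ (L (s+1) : ℝ) := by
      rw [hTc]; linarith
    have hbig : 2 * C * ((A s : ℝ) + mp + mq) * ((s:ℝ) + 2) ≤ (L (s+1) : ℝ) := by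
      have h1 := hKbig s
      have hX : (0:ℝ) ≤ (A s : ℝ) + mp + mq := by positivity
      calc 2 * C * ((A s : ℝ) + mp + mq) * ((s:ℝ) + 2)
          = ((A s : ℝ) + mp + mq) * (2 * C) * ((s:ℝ) + 2) := by ring
        _ ≤ ((A s : ℝ) + mp + mq) * (2 * C + 1) * ((s:ℝ) + 2) := by
            refine mul_le_mul_of_nonneg_right ?_ hs2pos.le
            exact mul_le_mul_of_nonneg_left (by linarith) hX
        _ ≤ (K s : ℝ) := h1
        _ ≤ (L (s+1) : ℝ) := by linarith
    have heq : (1 / (L (s+1) : ℝ)) * (∑ i ∈ Finset.range (L (s+1)), φ (f^[i] zl)) - γ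
        = ((∑ i ∈ Finset.range (L (s+1)), φ (f^[i] zl)) - (L (s+1) : ℝ) * γ) / (L (s+1) : ℝ) := by
      field_simp
    rw [heq, abs_div, abs_of_pos hT0, div_le_iff₀ hT0]
    have hp1 : 2 * C * ((A s : ℝ) + mp + mq) ≤ (L (s+1) : ℝ) / ((s:ℝ) + 2) :=
      (le_div_iff₀ hs2pos).2 hbig
    have hp2 : ((K s : ℝ) + 1) * (1 / (s + 2)) ≤ (L (s+1) : ℝ) * (1 / (s + 2)) :=
      mul_le_mul_of_nonneg_right hKT (by positivity)
    calc |(∑ i ∈ Finset.range (L (s+1)), φ (f^[i] zl)) - (L (s+1) : ℝ) * γ|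
        ≤ 2 * C * ((A s : ℝ) + mp + mq) + ((K s : ℝ) + 1) * (1 / (s + 2)) := hD
      _ ≤ (L (s+1) : ℝ) / ((s:ℝ) + 2) + (L (s+1) : ℝ) * (1 / (s + 2)) := by linarith
      _ = 2 / ((s:ℝ) + 2) * (L (s+1) : ℝ) := by field_simp; ring
  -- bound sequences tend to 0
  have hdiv : ∀ b : ℝ, Tendsto (fun k1 : ℕ => 2 / (2*(k1:ℝ) + b)) atTop (nhds 0) := by
    intro b
    have h1 : Tendsto (fun k1 : ℕ => 2*(k1:ℝ) + b) atTop atTop := by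
      apply tendsto_atTop_add_const_right
      exact (tendsto_natCast_atTop_atTop (R := ℝ)).const_mul_atTop (by norm_num)
    simpa [div_eq_mul_inv] using h1.inv_tendsto_atTop.const_mul (2:ℝ)
  have htendα : Tendsto (fun k1 : ℕ => (1 / (L (2*k1+2) : ℝ)) *
      ∑ i ∈ Finset.range (L (2*k1+2)), φ (f^[i] zl)) atTop (nhds α) := by
    rw [tendsto_iff_dist_tendsto_zero]
    refine squeeze_zero (fun k1 => dist_nonneg) (fun k1 => ?_) (hdiv 3)
    have h1 := hkey (2*k1+1)
    have hpar : γseq α β (2*k1+1+1) = α := by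
      have hmod : (2*k1+1+1) % 2 = 0 := by omega
      simp [γseq, hmod]
    rw [hpar] at h1
    have hc1 : ((2*k1+1 : ℕ) : ℝ) + 2 = 2*(k1:ℝ) + 3 := by push_cast; ring
    rw [hc1] at h1
    rw [Real.dist_eq]
    exact h1
  have htendβ : Tendsto (fun k1 : ℕ => (1 / (L (2*k1+1) : ℝ)) *
      ∑ i ∈ Finset.range (L (2*k1+1)), φ (f^[i] zl)) atTop (nhds β) := by
    rw [tendsto_iff_dist_tendsto_zero]
    refine squeeze_zero (fun k1 => dist_nonneg) (fun k1 => ?_) (hdiv 2)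
    have h1 := hkey (2*k1)
    have hpar : γseq α β (2*k1+1) = β := by
      have hmod : ¬ ((2*k1+1) % 2 = 0) := by omega
      simp [γseq, hmod]
    rw [hpar] at h1
    have hc1 : ((2*k1 : ℕ) : ℝ) + 2 = 2*(k1:ℝ) + 2 := by push_cast; ring
    rw [hc1] at h1
    rw [Real.dist_eq]
    exact h1
  have hm2 : StrictMono (fun k1 : ℕ => L (2*k1+2)) :=
    fun a b h => hLmono (show 2*a+2 < 2*b+2 by omega)
  have hm1 : StrictMono (fun k1 : ℕ => L (2*k1+1)) :=
    fun a b h => hLmono (show 2*a+1 < 2*b+1 by omega)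
  refine ⟨zl, fun k1 => L (2*k1+2), fun k1 => L (2*k1+1), hm2, hm1, htendα, htendβ, ?_⟩
  rintro ⟨c, hc⟩
  have h1 : Tendsto (fun k1 : ℕ => (1 / (L (2*k1+2) : ℝ)) *
      ∑ i ∈ Finset.range (L (2*k1+2)), φ (f^[i] zl)) atTop (nhds c) :=
    hc.comp hm2.tendsto_atTop
  have h2 : Tendsto (fun k1 : ℕ => (1 / (L (2*k1+1) : ℝ)) *
      ∑ i ∈ Finset.range (L (2*k1+1)), φ (f^[i] zl)) atTop (nhds c) :=
    hc.comp hm1.tendsto_atTop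
  have e1 : c = α := tendsto_nhds_unique h1 htendα
  have e2 : c = β := tendsto_nhds_unique h2 htendβ
  linarith
end

section
/- Let f be a continuous map of a compact metric space with the specification property, and φ continuous. If every point x is φ-regular, i.e. the limit lim_{n→∞} (1/n)∑_{i=0}^{n-1} φ(fⁱ(x)) exists for every x, then the Birkhoff averages of φ at all periodic points are equal. -/
open Filter

lemma aux_periodic_sum {M : Type*} (f : M → M) (φ : M → ℝ) (p : M) (m : ℕ)
    (hp : f^[m] p = p) (c : ℕ) :
    ∑ j ∈ Finset.range (m * c), φ (f^[j] p) = (c : ℝ) * ∑ j ∈ Finset.range m, φ (f^[j] p) := by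
  induction c with
  | zero => simp
  | succ c ih =>
    rw [Nat.mul_succ, Finset.sum_range_add, ih]
    have hfix : f^[m * c] p = p := by
      rw [Function.iterate_mul]; exact Function.iterate_fixed hp c
    have he : ∀ x ∈ Finset.range m, φ (f^[m * c + x] p) = φ (f^[x] p) := by
      intro x _
      rw [Nat.add_comm, Function.iterate_add_apply, hfix]
    rw [Finset.sum_congr rfl he]
    push_cast; ring

lemma aux_avg_abs (m : ℕ) (hm : 1 ≤ m) (g : ℕ → ℝ) (C : ℝ) (hg : ∀ i, |g i| ≤ C) :
    |(1 / (m : ℝ)) * ∑ i ∈ Finset.range m, g i| ≤ C := by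
  have hm0 : (0:ℝ) < m := by exact_mod_cast hm
  have h1 : |∑ i ∈ Finset.range m, g i| ≤ (m : ℝ) * C := by
    calc |∑ i ∈ Finset.range m, g i| ≤ ∑ i ∈ Finset.range m, |g i| :=
          Finset.abs_sum_le_sum_abs _ _
      _ ≤ ∑ _i ∈ Finset.range m, C := Finset.sum_le_sum fun i _ => hg i
      _ = (m : ℝ) * C := by simp [mul_comm]
  calc |(1 / (m : ℝ)) * ∑ i ∈ Finset.range m, g i|
      = (1 / (m : ℝ)) * |∑ i ∈ Finset.range m, g i| := by
        rw [abs_mul, abs_of_pos (by positivity)]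
    _ ≤ (1 / (m : ℝ)) * ((m : ℝ) * C) := by
        apply mul_le_mul_of_nonneg_left h1 (by positivity)
    _ = C := by field_simp

lemma aux_pigeon (F : ℕ → ℕ) (S : ℕ) (h : ∀ᶠ m in atTop, F m ≤ S) :
    ∃ T ≤ S, ∃ᶠ m in atTop, F m = T := by
  by_contra hc
  push_neg at hc
  have h2 : ∀ T ∈ Finset.range (S + 1), ∀ᶠ m in atTop, F m ≠ T := by
    intro T hT
    have := hc T (by simpa using Nat.lt_succ_iff.1 (Finset.mem_range.1 hT))
    exact this
  obtain ⟨m, hm1, hm2⟩ := (h.and ((eventually_all_finset (Finset.range (S + 1))).2 h2)).exists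
  exact hm2 (F m) (Finset.mem_range.2 (by omega)) rfl

lemma aux_seg {M : Type*} (f : M → M) (φ : M → ℝ) (w x0 : M) (b K : ℕ) (δ C μ : ℝ)
    (hK : 1 ≤ K)
    (hclose : ∀ j < K, |φ (f^[b + j] w) - φ (f^[j] x0)| ≤ δ)
    (hsum : ∑ j ∈ Finset.range K, φ (f^[j] x0) = (K : ℝ) * μ)
    (hC : ∀ y, |φ y| ≤ C) (hμ : |μ| ≤ C)
    (hbK : 2 * C * b ≤ (K : ℝ) * δ) :
    |(1 / ((b + K : ℕ) : ℝ)) * ∑ n ∈ Finset.range (b + K), φ (f^[n] w) - μ| ≤ 2 * δ := by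
  have hδ0 : 0 ≤ δ := le_trans (abs_nonneg _) (hclose 0 hK)
  have hT0 : (0:ℝ) < ((b + K : ℕ) : ℝ) := by
    have : 1 ≤ b + K := le_add_of_le_right hK
    exact_mod_cast this
  have hsplit : ∑ n ∈ Finset.range (b + K), φ (f^[n] w) =
      ∑ n ∈ Finset.range b, φ (f^[n] w) + ∑ j ∈ Finset.range K, φ (f^[b + j] w) :=
    Finset.sum_range_add _ b K
  have h1 : |∑ n ∈ Finset.range b, φ (f^[n] w) - (b : ℝ) * μ| ≤ (b : ℝ) * (2 * C) := by
    calc |∑ n ∈ Finset.range b, φ (f^[n] w) - (b : ℝ) * μ|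
        = |∑ n ∈ Finset.range b, (φ (f^[n] w) - μ)| := by
          rw [Finset.sum_sub_distrib]; simp [mul_comm]
      _ ≤ ∑ n ∈ Finset.range b, |φ (f^[n] w) - μ| := Finset.abs_sum_le_sum_abs _ _
      _ ≤ ∑ _n ∈ Finset.range b, (2 * C) := by
          refine Finset.sum_le_sum fun n _ => ?_
          calc |φ (f^[n] w) - μ| ≤ |φ (f^[n] w)| + |μ| := abs_sub _ _
            _ ≤ C + C := add_le_add (hC _) hμ
            _ = 2 * C := by ring
      _ = (b : ℝ) * (2 * C) := by simp [mul_comm]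
  have h2 : |∑ j ∈ Finset.range K, φ (f^[b + j] w) - (K : ℝ) * μ| ≤ (K : ℝ) * δ := by
    rw [← hsum]
    calc |∑ j ∈ Finset.range K, φ (f^[b + j] w) - ∑ j ∈ Finset.range K, φ (f^[j] x0)|
        = |∑ j ∈ Finset.range K, (φ (f^[b + j] w) - φ (f^[j] x0))| := by
          rw [Finset.sum_sub_distrib]
      _ ≤ ∑ j ∈ Finset.range K, |φ (f^[b + j] w) - φ (f^[j] x0)| :=
          Finset.abs_sum_le_sum_abs _ _
      _ ≤ ∑ _j ∈ Finset.range K, δ := Finset.sum_le_sum fun j hj =>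
          hclose j (Finset.mem_range.1 hj)
      _ = (K : ℝ) * δ := by simp [mul_comm]
  have hkey : |∑ n ∈ Finset.range (b + K), φ (f^[n] w) - ((b + K : ℕ) : ℝ) * μ|
      ≤ 2 * ((K : ℝ) * δ) := by
    have : ∑ n ∈ Finset.range (b + K), φ (f^[n] w) - ((b + K : ℕ) : ℝ) * μ =
        (∑ n ∈ Finset.range b, φ (f^[n] w) - (b : ℝ) * μ) +
        (∑ j ∈ Finset.range K, φ (f^[b + j] w) - (K : ℝ) * μ) := by
      rw [hsplit]; push_cast; ring
    rw [this]
    calc |_ + _| ≤ _ + _ := abs_add_le _ _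
      _ ≤ (b : ℝ) * (2 * C) + (K : ℝ) * δ := add_le_add h1 h2
      _ ≤ (K : ℝ) * δ + (K : ℝ) * δ := by nlinarith
      _ = 2 * ((K : ℝ) * δ) := by ring
  have heq : (1 / ((b + K : ℕ) : ℝ)) * ∑ n ∈ Finset.range (b + K), φ (f^[n] w) - μ =
      (∑ n ∈ Finset.range (b + K), φ (f^[n] w) - ((b + K : ℕ) : ℝ) * μ) / ((b + K : ℕ) : ℝ) := by
    field_simp
  rw [heq, abs_div, abs_of_pos hT0, div_le_iff₀ hT0]
  have hKT : (K : ℝ) ≤ ((b + K : ℕ) : ℝ) := by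
    have : K ≤ b + K := Nat.le_add_left _ _
    exact_mod_cast this
  nlinarith

/-- If a continuous map with the specification property is such that the
Birkhoff average of a continuous `φ` exists at every point, then the Birkhoff
averages of `φ` at all periodic points coincide. -/
theorem stmt9 {M : Type*} [MetricSpace M] [CompactSpace M]
    (f : M → M) (hf : Continuous f) (hspec : SpecificationProperty f)
    (φ : M → ℝ) (hφ : Continuous φ)
    (hreg : ∀ x : M, ∃ c : ℝ, Tendsto (fun n : ℕ => (1 / (n : ℝ)) *
      ∑ i ∈ Finset.range n, φ (f^[i] x)) atTop (nhds c)) :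
    ∀ (p q : M) (mp mq : ℕ), 1 ≤ mp → 1 ≤ mq →
      f^[mp] p = p → f^[mq] q = q →
      (1 / (mp : ℝ)) * ∑ i ∈ Finset.range mp, φ (f^[i] p) =
        (1 / (mq : ℝ)) * ∑ i ∈ Finset.range mq, φ (f^[i] q) := by
  intro p q mp mq hmp hmq hp hq
  by_contra hne
  set α := (1 / (mp : ℝ)) * ∑ i ∈ Finset.range mp, φ (f^[i] p) with hα
  set β := (1 / (mq : ℝ)) * ∑ i ∈ Finset.range mq, φ (f^[i] q) with hβ
  set δ := |α - β| / 5 with hδdef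
  have hδ : 0 < δ := by
    have : α - β ≠ 0 := sub_ne_zero.2 hne
    have := abs_pos.2 this
    positivity
  -- bound on φ
  obtain ⟨xC, -, hxC⟩ := IsCompact.exists_isMaxOn isCompact_univ ⟨p, Set.mem_univ p⟩
    ((continuous_abs.comp hφ).continuousOn)
  set C := |φ xC| with hCdef
  have hC : ∀ y, |φ y| ≤ C := fun y => hxC (Set.mem_univ y)
  have hC0 : 0 ≤ C := le_trans (abs_nonneg _) (hC xC)
  have hαC : |α| ≤ C := aux_avg_abs mp hmp _ C fun i => hC _
  have hβC : |β| ≤ C := aux_avg_abs mq hmq _ C fun i => hC _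
  -- uniform continuity
  obtain ⟨ε, hε, hεδ⟩ := Metric.uniformContinuous_iff.1
    (CompactSpace.uniformContinuous_of_continuous hφ) δ hδ
  obtain ⟨N, hN⟩ := hspec ε hε
  -- constant D
  set D := ⌈2 * C / δ⌉₊ + 1 with hDdef
  have hD : 2 * C ≤ δ * D := by
    have h1 : 2 * C / δ ≤ (D : ℝ) := by
      have := Nat.le_ceil (2 * C / δ)
      have h2 : ((⌈2 * C / δ⌉₊ : ℕ) : ℝ) ≤ (D : ℝ) := by
        exact_mod_cast Nat.le_succ _
      linarith
    calc 2 * C = (2 * C / δ) * δ := by field_simp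
      _ ≤ (D : ℝ) * δ := mul_le_mul_of_nonneg_right h1 hδ.le
      _ = δ * D := mul_comm _ _
  -- recursive gap bounds B and segment lengths K
  set B : ℕ → ℕ := fun n =>
    Nat.rec 0 (fun i Bi => Bi + D * (mp * mq) * (i + 1) * (Bi + 1) + N) n with hB
  set K : ℕ → ℕ := fun i => D * (mp * mq) * (i + 1) * (B i + 1) with hK
  have hBsucc : ∀ i, B (i + 1) = B i + K i + N := fun i => rfl
  have hD1 : 1 ≤ D := Nat.le_add_left 1 _
  have hKge : ∀ i, i + 1 ≤ K i := by
    intro i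
    calc i + 1 ≤ 1 * (1 * 1) * (i + 1) * (0 + 1) := by omega
      _ ≤ D * (mp * mq) * (i + 1) * (B i + 1) := by
        apply Nat.mul_le_mul (Nat.mul_le_mul (Nat.mul_le_mul hD1
          (Nat.mul_le_mul hmp hmq)) (le_refl _)) (by omega)
  have hK1 : ∀ i, 1 ≤ K i := fun i => le_trans (by omega) (hKge i)
  have hKDB : ∀ i, D * B i ≤ K i := by
    intro i
    calc D * B i ≤ D * (1 * 1) * (0 + 1) * (B i + 1) := by ring_nf; omega
      _ ≤ D * (mp * mq) * (i + 1) * (B i + 1) := by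
        apply Nat.mul_le_mul (Nat.mul_le_mul (Nat.mul_le_mul (le_refl D)
          (Nat.mul_le_mul hmp hmq)) (by omega)) (le_refl _)
  have hKδ : ∀ i, 2 * C * (B i : ℝ) ≤ (K i : ℝ) * δ := by
    intro i
    have h1 : (D : ℝ) * B i ≤ K i := by exact_mod_cast hKDB i
    have hB0 : (0:ℝ) ≤ (B i : ℝ) := Nat.cast_nonneg _
    calc 2 * C * (B i : ℝ) ≤ (δ * D) * B i := mul_le_mul_of_nonneg_right hD hB0
      _ = δ * ((D:ℝ) * B i) := by ring
      _ ≤ δ * (K i : ℝ) := mul_le_mul_of_nonneg_left h1 hδ.le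
      _ = (K i : ℝ) * δ := mul_comm _ _
  have hmpK : ∀ i, mp ∣ K i := fun i => ⟨D * mq * (i + 1) * (B i + 1), by rw [hK]; ring⟩
  have hmqK : ∀ i, mq ∣ K i := fun i => ⟨D * mp * (i + 1) * (B i + 1), by rw [hK]; ring⟩
  -- apply specification
  set xseq : ℕ → M := fun i => if i % 2 = 0 then p else q with hxseq
  choose a z ha hz using fun r => hN r xseq K
  set w : ℕ → M := fun r => f^[a r 0] (z r) with hw
  have hmono : ∀ r i, i < r → a r 0 ≤ a r i := by
    intro r i
    induction i with
    | zero => intro _; exact le_refl _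
    | succ i ih =>
      intro h
      exact (ih (by omega)).trans (ha r i (by omega)).1
  have hbB : ∀ r i, i < r → a r i ≤ a r 0 + B i := by
    intro r i
    induction i with
    | zero => intro _; omega
    | succ i ih =>
      intro h
      have h1 := (ha r i (by omega)).2
      have h2 := ih (by omega)
      rw [hBsucc]
      omega
  -- sums over segments
  have hsump : ∀ i, ∑ j ∈ Finset.range (K i), φ (f^[j] p) = (K i : ℝ) * α := by
    intro i
    obtain ⟨c, hc⟩ := hmpK i
    rw [hc, aux_periodic_sum f φ p mp hp c, hα]
    have hmp0 : (mp : ℝ) ≠ 0 := by positivity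
    push_cast
    field_simp
  have hsumq : ∀ i, ∑ j ∈ Finset.range (K i), φ (f^[j] q) = (K i : ℝ) * β := by
    intro i
    obtain ⟨c, hc⟩ := hmqK i
    rw [hc, aux_periodic_sum f φ q mq hq c, hβ]
    have : (mq : ℝ) ≠ 0 := by positivity
    push_cast
    field_simp
  -- segment estimate
  have hseg : ∀ r i, i < r →
      |(1 / (((a r i - a r 0 + K i : ℕ)) : ℝ)) *
        ∑ n ∈ Finset.range (a r i - a r 0 + K i), φ (f^[n] (w r)) -
        (if i % 2 = 0 then α else β)| ≤ 2 * δ := by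
    intro r i hi
    have hle := hmono r i hi
    have hclose : ∀ j < K i, |φ (f^[a r i - a r 0 + j] (w r)) - φ (f^[j] (xseq i))| ≤ δ := by
      intro j hj
      have hiter : f^[a r i - a r 0 + j] (w r) = f^[a r i + j] (z r) := by
        rw [hw]
        simp only
        rw [← Function.iterate_add_apply]
        congr 1
        omega
      rw [hiter]
      have hd := hz r i hi j (le_of_lt hj)
      have := hεδ hd
      rw [Real.dist_eq] at this
      exact this.le
    have hbound : 2 * C * ((a r i - a r 0 : ℕ) : ℝ) ≤ (K i : ℝ) * δ := by
      have h1 : a r i - a r 0 ≤ B i := by have := hbB r i hi; omega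
      have h1' : ((a r i - a r 0 : ℕ) : ℝ) ≤ (B i : ℝ) := by exact_mod_cast h1
      calc 2 * C * ((a r i - a r 0 : ℕ) : ℝ) ≤ 2 * C * (B i : ℝ) := by nlinarith
        _ ≤ (K i : ℝ) * δ := hKδ i
    by_cases hi2 : i % 2 = 0
    · rw [if_pos hi2]
      have hx : xseq i = p := by rw [hxseq]; simp [hi2]
      rw [hx] at hclose
      exact aux_seg f φ (w r) p _ _ δ C α (hK1 i) hclose (hsump i) hC hαC hbound
    · rw [if_neg hi2]
      have hx : xseq i = q := by rw [hxseq]; simp [hi2]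
      rw [hx] at hclose
      exact aux_seg f φ (w r) q _ _ δ C β (hK1 i) hclose (hsumq i) hC hβC hbound
  -- extract convergent subsequence
  obtain ⟨wlim, -, g, hgmono, hglim⟩ := isCompact_univ.tendsto_subseq
    (x := w) (fun n => Set.mem_univ _)
  -- frequency lemma
  have hfreq : ∀ i : ℕ, ∃ T, K i ≤ T ∧
      |(1 / (T : ℝ)) * ∑ n ∈ Finset.range T, φ (f^[n] wlim) -
        (if i % 2 = 0 then α else β)| ≤ 2 * δ := by
    intro i
    set F : ℕ → ℕ := fun m => (a (g m) i - a (g m) 0) + K i with hF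
    have hFb : ∀ᶠ m in atTop, F m ≤ B i + K i := by
      filter_upwards [eventually_ge_atTop (i + 1)] with m hm
      have hgi : i < g m := lt_of_lt_of_le (by omega) (hgmono.le_apply.trans (le_refl _)) |>.trans_le (le_refl _)
      have := hbB (g m) i hgi
      rw [hF]; simp only; omega
    obtain ⟨T, hTS, hTfreq⟩ := aux_pigeon F (B i + K i) hFb
    refine ⟨T, ?_, ?_⟩
    · obtain ⟨m, hm⟩ := hTfreq.exists
      rw [hF] at hm; simp only at hm; omega
    · have hcont : Continuous (fun y : M => (1 / (T : ℝ)) *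
          ∑ n ∈ Finset.range T, φ (f^[n] y)) :=
        continuous_const.mul (continuous_finset_sum _ fun n _ => hφ.comp (hf.iterate n))
      have hlim : Tendsto (fun m => (1 / (T : ℝ)) *
          ∑ n ∈ Finset.range T, φ (f^[n] (w (g m)))) atTop
          (nhds ((1 / (T : ℝ)) * ∑ n ∈ Finset.range T, φ (f^[n] wlim))) :=
        ((hcont.tendsto wlim).comp hglim)
      have hclosed : IsClosed {y : ℝ | |y - (if i % 2 = 0 then α else β)| ≤ 2 * δ} :=
        isClosed_le (by fun_prop) continuous_const
      have hfre : ∃ᶠ m in atTop, (1 / (T : ℝ)) *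
          ∑ n ∈ Finset.range T, φ (f^[n] (w (g m))) ∈
          {y : ℝ | |y - (if i % 2 = 0 then α else β)| ≤ 2 * δ} := by
        refine (hTfreq.and_eventually (eventually_ge_atTop (i + 1))).mono ?_
        rintro m ⟨hFm, hmi⟩
        have hgi : i < g m := by
          have : m ≤ g m := hgmono.le_apply
          omega
        have := hseg (g m) i hgi
        rw [hF] at hFm
        simp only at hFm
        rw [hFm] at this
        exact this
      exact hclosed.mem_of_frequently_of_tendsto hfre hlim
  -- conclusion
  obtain ⟨c, hc⟩ := hreg wlim
  have habs : ∀ μ : ℝ, IsClosed {y : ℝ | |y - μ| ≤ 2 * δ} := fun μ =>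
    isClosed_le (by fun_prop) continuous_const
  have hcα : |c - α| ≤ 2 * δ := by
    refine (habs α).mem_of_frequently_of_tendsto ?_ hc
    rw [frequently_atTop]
    intro n
    obtain ⟨T, hT1, hT2⟩ := hfreq (2 * n)
    have : (2 * n) % 2 = 0 := by omega
    rw [this] at hT2
    simp only [if_pos rfl] at hT2
    exact ⟨T, by have := hKge (2 * n); omega, hT2⟩
  have hcβ : |c - β| ≤ 2 * δ := by
    refine (habs β).mem_of_frequently_of_tendsto ?_ hc
    rw [frequently_atTop]
    intro n
    obtain ⟨T, hT1, hT2⟩ := hfreq (2 * n + 1)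
    have h2 : (2 * n + 1) % 2 = 1 := by omega
    rw [h2] at hT2
    simp only [Nat.one_ne_zero, if_false] at hT2
    exact ⟨T, by have := hKge (2 * n + 1); omega, hT2⟩
  have : |α - β| ≤ |α - c| + |c - β| := abs_sub_le α c β
  rw [abs_sub_comm α c] at this
  rw [hδdef] at hcα hcβ
  linarith [abs_pos.2 (sub_ne_zero.2 hne)]
end
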